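/- arXiv:1703.01593 — 4 statements merged into one kernel-verified Lean document; each statement's English description precedes it below -/
import Mathlib

section
/- For every retracting front of amplitude 1 and velocity v, the function B never vanishes and the modulus ξ ↦ |B(ξ)| is strictly increasing on the real line. -/
open Filter Asymptotics MeasureTheory

noncomputable section

section Aux

variable {v : ℝ} {B : ℝ → ℂ}

/-- component derivative -/
lemma aux_re_deriv {ξ : ℝ} {b : ℂ} (h : HasDerivAt B b ξ) :
    HasDerivAt (fun x => (B x).re) b.re ξ :=
  Complex.reCLM.hasFDerivAt.comp_hasDerivAt ξ h

lemma aux_im_deriv {ξ : ℝ} {b : ℂ} (h : HasDerivAt B b ξ) :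
    HasDerivAt (fun x => (B x).im) b.im ξ :=
  Complex.imCLM.hasFDerivAt.comp_hasDerivAt ξ h

end Aux

/-- A retracting front of amplitude 1 and velocity `v`: `v > 0`, `B` is a `C²` solution on all
of `ℝ` of `B'' = -v B' + i B - i |B|² B`, with `|B(ξ)| → 0` as `ξ → -∞` and `|B(ξ)| → 1` as
`ξ → +∞`. -/
def IsRetractingFront (v : ℝ) (B : ℝ → ℂ) : Prop :=
  0 < v ∧ ContDiff ℝ 2 B ∧
  (∀ ξ : ℝ, deriv (deriv B) ξ =
      -(v : ℂ) * deriv B ξ + Complex.I * B ξ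
        - Complex.I * ((‖B ξ‖ : ℂ)) ^ 2 * B ξ) ∧
  Tendsto (fun ξ => ‖B ξ‖) atBot (nhds 0) ∧
  Tendsto (fun ξ => ‖B ξ‖) atTop (nhds 1)

/-- A retracting front is steep if `1 - |B ξ| = o(e^{-vξ})` at `+∞` and the total variation
of the phase on `(0, +∞)` is finite. -/
def IsSteep (v : ℝ) (B : ℝ → ℂ) : Prop :=
  (fun ξ => 1 - ‖B ξ‖) =o[atTop] (fun ξ => Real.exp (-v * ξ)) ∧
  ∫⁻ ξ in Set.Ioi (0 : ℝ), ENNReal.ofReal ((deriv B ξ / B ξ).im) < ⊤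

/-- A retracting front is gradual if `1 - |B ξ| = O(1/ξ)` at `+∞` and the total variation
of the phase on `(0, +∞)` is infinite. -/
def IsGradual (v : ℝ) (B : ℝ → ℂ) : Prop :=
  (fun ξ => 1 - ‖B ξ‖) =O[atTop] (fun ξ => 1 / ξ) ∧
  ∫⁻ ξ in Set.Ioi (0 : ℝ), ENNReal.ofReal ((deriv B ξ / B ξ).im) = ⊤

/-- The modulus of a retracting front never vanishes and is strictly increasing on `ℝ`. -/
theorem retracting_front_amplitude_nonzero_strictMono
    (v : ℝ) (B : ℝ → ℂ) (hB : IsRetractingFront v B) :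
    (∀ ξ : ℝ, B ξ ≠ 0) ∧ StrictMono (fun ξ => ‖B ξ‖) := by
  obtain ⟨hv, hC2, hODE, hbot, htop⟩ := hB
  -- differentiability facts
  have h2 : ContDiff ℝ ((1:ℕ∞)+1) B := hC2.of_le (by norm_num)
  have h1 : ContDiff ℝ 1 (deriv B) := (contDiff_succ_iff_deriv.mp h2).2.2
  have hBdiff : Differentiable ℝ B := hC2.differentiable (by norm_num)
  have hB'diff : Differentiable ℝ (deriv B) := h1.differentiable one_ne_zero
  have hBd : ∀ ξ, HasDerivAt B (deriv B ξ) ξ := fun ξ => (hBdiff ξ).hasDerivAt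
  have hB'd : ∀ ξ, HasDerivAt (deriv B) (deriv (deriv B) ξ) ξ :=
    fun ξ => (hB'diff ξ).hasDerivAt
  set m : ℝ → ℝ := fun ξ => (B ξ).re ^ 2 + (B ξ).im ^ 2 with hm_def
  set p : ℝ → ℝ := fun ξ =>
    2 * ((B ξ).re * (deriv B ξ).re + (B ξ).im * (deriv B ξ).im) with hp_def
  set q : ℝ → ℝ := fun ξ => (deriv B ξ).re ^ 2 + (deriv B ξ).im ^ 2 with hq_def
  have hq_nonneg : ∀ ξ, 0 ≤ q ξ := fun ξ => by positivity
  have hm_nonneg : ∀ ξ, 0 ≤ m ξ := fun ξ => by positivity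
  have hm_eq : ∀ ξ, m ξ = (‖B ξ‖)^2 := fun ξ => by
    rw [hm_def]; rw [Complex.sq_norm, Complex.normSq_apply]; ring
  -- derivative of m
  have hmd : ∀ ξ, HasDerivAt m (p ξ) ξ := by
    intro ξ
    have h1 := ((aux_re_deriv (hBd ξ)).pow 2).add ((aux_im_deriv (hBd ξ)).pow 2)
    refine h1.congr_deriv ?_
    simp [hp_def]; ring
  -- derivative of p
  have hpd : ∀ ξ, HasDerivAt p (2 * q ξ - v * p ξ) ξ := by
    intro ξ
    have hre2 := aux_re_deriv (hB'd ξ)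
    have him2 := aux_im_deriv (hB'd ξ)
    have h1 := (((aux_re_deriv (hBd ξ)).mul hre2).add
      ((aux_im_deriv (hBd ξ)).mul him2)).const_mul (2:ℝ)
    refine h1.congr_deriv ?_
    have hO := hODE ξ
    have hre : (deriv (deriv B) ξ).re
        = -v * (deriv B ξ).re - (1 - (‖B ξ‖)^2) * (B ξ).im := by
      rw [hO]; simp [Complex.mul_re, Complex.mul_im, ← Complex.ofReal_pow]; ring
    have him : (deriv (deriv B) ξ).im
        = -v * (deriv B ξ).im + (1 - (‖B ξ‖)^2) * (B ξ).re := by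
      rw [hO]; simp [Complex.mul_re, Complex.mul_im, ← Complex.ofReal_pow]; ring
    rw [hre, him, hq_def, hp_def]; ring
  -- h := exp (v ξ) * p ξ is monotone
  set H : ℝ → ℝ := fun ξ => Real.exp (v * ξ) * p ξ with hH_def
  have hHd : ∀ ξ, HasDerivAt H (Real.exp (v * ξ) * (2 * q ξ)) ξ := by
    intro ξ
    have he : HasDerivAt (fun ξ : ℝ => Real.exp (v * ξ)) (v * Real.exp (v * ξ)) ξ := by
      simpa [mul_comm, Function.comp_def] using (Real.hasDerivAt_exp (v * ξ)).comp ξ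
        ((hasDerivAt_id ξ).const_mul v)
    have := he.mul (hpd ξ)
    refine this.congr_deriv ?_
    ring
  have hHmono : Monotone H := by
    have : ∀ ξ, 0 ≤ Real.exp (v * ξ) * (2 * q ξ) := fun ξ => by
      have := hq_nonneg ξ; positivity
    exact monotone_of_deriv_nonneg (fun ξ => (hHd ξ).differentiableAt)
      (fun ξ => by rw [(hHd ξ).deriv]; exact this ξ)
  have hm_tendsto_bot : Tendsto m atBot (nhds 0) := by
    have := (hbot.pow 2)
    simpa [hm_eq] using this.congr' (Eventually.of_forall fun ξ => (hm_eq ξ).symm)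
  -- key positivity
  have hp_pos : ∀ ξ, 0 < p ξ := by
    intro ξ₀
    by_contra hle
    push_neg at hle
    -- p ≤ 0 on Iic ξ₀
    have hple : ∀ ξ ≤ ξ₀, p ξ ≤ 0 := by
      intro ξ hξ
      have := hHmono hξ
      have hH0 : H ξ₀ ≤ 0 := mul_nonpos_of_nonneg_of_nonpos (Real.exp_pos _).le hle
      have h' : Real.exp (v * ξ) * p ξ ≤ 0 := this.trans hH0
      nlinarith [Real.exp_pos (v * ξ)]
    -- m is antitone on Iic ξ₀
    have hanti : AntitoneOn m (Set.Iic ξ₀) := by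
      apply antitoneOn_of_deriv_nonpos (convex_Iic ξ₀)
        (fun ξ _ => (hmd ξ).continuousAt.continuousWithinAt)
        (fun ξ hξ => ((hmd ξ).differentiableAt).differentiableWithinAt)
      intro ξ hξ
      rw [interior_Iic] at hξ
      rw [(hmd ξ).deriv]  -- derivWithin? interior Iic
      exact hple ξ hξ.le
    -- m vanishes on Iic ξ₀
    have hm0 : ∀ ξ ≤ ξ₀, m ξ = 0 := by
      intro ξ hξ
      refine le_antisymm ?_ (hm_nonneg ξ)
      have hev : ∀ᶠ η in atBot, m ξ ≤ m η := by
        filter_upwards [eventually_le_atBot ξ] with η hη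
        exact hanti (Set.mem_Iic.mpr (hη.trans hξ)) (Set.mem_Iic.mpr hξ) hη
      exact ge_of_tendsto hm_tendsto_bot hev
    have hB0 : ∀ ξ ≤ ξ₀, B ξ = 0 := by
      intro ξ hξ
      have h := hm0 ξ hξ
      have h1 : (B ξ).re ^ 2 + (B ξ).im ^ 2 = 0 := h
      have : (B ξ).re = 0 ∧ (B ξ).im = 0 := by constructor <;> nlinarith
      exact Complex.ext this.1 this.2
    -- derivative vanishes at ξ₀
    have hB'0 : deriv B ξ₀ = 0 := by
      have hz : ∀ ξ < ξ₀, deriv B ξ = 0 := by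
        intro ξ hξ
        have hev : B =ᶠ[nhds ξ] fun _ => 0 := by
          filter_upwards [Iio_mem_nhds hξ] with η hη
          exact hB0 η hη.le
        rw [hev.deriv_eq, deriv_const]
      have h₁ : Tendsto (deriv B) (nhdsWithin ξ₀ (Set.Iio ξ₀)) (nhds (deriv B ξ₀)) :=
        (hB'diff.continuous.continuousAt).continuousWithinAt.tendsto
      have h₂ : Tendsto (deriv B) (nhdsWithin ξ₀ (Set.Iio ξ₀)) (nhds 0) := by
        apply tendsto_const_nhds.congr'
        filter_upwards [self_mem_nhdsWithin] with η hη
        exact (hz η hη).symm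
      exact tendsto_nhds_unique h₁ h₂
    -- Gronwall: B vanishes on [ξ₀, ∞)
    have hzero : ∀ x, ξ₀ ≤ x → B x = 0 := by
      intro b hb
      obtain ⟨x₀, -, hM'⟩ := (isCompact_Icc (a := ξ₀) (b := b)).exists_isMaxOn
        ⟨ξ₀, le_refl _, hb⟩ ((continuous_norm.comp
          hBdiff.continuous).continuousOn)
      have hM : ∀ x ∈ Set.Icc ξ₀ b, ‖B x‖ ≤ ‖B x₀‖ :=
        fun x hx => hM' hx
      set M : ℝ := ‖B x₀‖ with hM_def
      have hM0 : 0 ≤ M := norm_nonneg _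
      set K : ℝ := v + 2 + M ^ 2 with hK_def
      set f : ℝ → ℂ × ℂ := fun ξ => (B ξ, deriv B ξ) with hf_def
      have hfd : ∀ x, HasDerivAt f (deriv B x, deriv (deriv B) x) x :=
        fun x => (hBd x).prodMk (hB'd x)
      have hfc : ContinuousOn f (Set.Icc ξ₀ b) :=
        fun x _ => ((hfd x).continuousAt).continuousWithinAt
      have hfa : ‖f ξ₀‖ ≤ 0 := by
        have : f ξ₀ = (0, 0) := by simp [hf_def, hB0 ξ₀ le_rfl, hB'0]
        rw [this]; simp [Prod.norm_def]
      have hbound : ∀ x ∈ Set.Ico ξ₀ b,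
          ‖(deriv B x, deriv (deriv B) x)‖ ≤ K * ‖f x‖ + 0 := by
        intro x hx
        have haM : ‖B x‖ ≤ M := hM x ⟨hx.1, hx.2.le⟩
        have hBn : ‖B x‖ = ‖B x‖ := rfl
        have hnorm2 : ‖deriv (deriv B) x‖
            ≤ v * ‖deriv B x‖ + (1 + M ^ 2) * ‖B x‖ := by
          rw [hODE x]
          have t1 : ‖-(v:ℂ) * deriv B x‖ = v * ‖deriv B x‖ := by
            rw [norm_mul]
            simp [abs_of_pos hv]
          have t2 : ‖Complex.I * B x‖ = ‖B x‖ := by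
            rw [norm_mul]; simp
          have t3 : ‖Complex.I * ((‖B x‖ : ℂ)) ^ 2 * B x‖
              ≤ M ^ 2 * ‖B x‖ := by
            rw [norm_mul, norm_mul]
            have : ‖((‖B x‖ : ℂ)) ^ 2‖ = (‖B x‖) ^ 2 := by
              rw [norm_pow]
              simp [norm_nonneg]
            rw [this]
            simp only [Complex.norm_I, one_mul]
            have habs0 : (0:ℝ) ≤ ‖B x‖ := norm_nonneg _
            have h4 : ‖B x‖ ^ 2 ≤ M ^ 2 := by nlinarith
            nlinarith [norm_nonneg (B x), mul_le_mul_of_nonneg_right h4 (norm_nonneg (B x))]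
          calc ‖-(v:ℂ) * deriv B x + Complex.I * B x
                - Complex.I * ((‖B x‖ : ℂ)) ^ 2 * B x‖
              ≤ ‖-(v:ℂ) * deriv B x + Complex.I * B x‖
                + ‖Complex.I * ((‖B x‖ : ℂ)) ^ 2 * B x‖ := norm_sub_le _ _
            _ ≤ ‖-(v:ℂ) * deriv B x‖ + ‖Complex.I * B x‖
                + ‖Complex.I * ((‖B x‖ : ℂ)) ^ 2 * B x‖ := by
                  gcongr; exact norm_add_le _ _
            _ ≤ v * ‖deriv B x‖ + ‖B x‖ + M ^ 2 * ‖B x‖ := by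
                  rw [t1, t2]; gcongr
            _ = v * ‖deriv B x‖ + (1 + M ^ 2) * ‖B x‖ := by ring
        rw [Prod.norm_def, Prod.norm_def, add_zero]
        have hle1 : ‖B x‖ ≤ max ‖B x‖ ‖deriv B x‖ := le_max_left _ _
        have hle2 : ‖deriv B x‖ ≤ max ‖B x‖ ‖deriv B x‖ := le_max_right _ _
        have hmax0 : (0:ℝ) ≤ max ‖B x‖ ‖deriv B x‖ :=
          le_trans (norm_nonneg _) hle1
        apply max_le
        · nlinarith
        · nlinarith
      have key := norm_le_gronwallBound_of_norm_deriv_right_le hfc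
        (fun x hx => (hfd x).hasDerivWithinAt) hfa hbound b ⟨hb, le_rfl⟩
      rw [gronwallBound_ε0_δ0] at key
      have : ‖B b‖ ≤ ‖f b‖ := by rw [Prod.norm_def]; exact le_max_left _ _
      have hle : ‖B b‖ ≤ 0 := this.trans key
      exact norm_le_zero_iff.mp hle
    -- contradiction with the limit at +∞
    have habs0 : Tendsto (fun ξ => ‖B ξ‖) atTop (nhds 0) := by
      apply tendsto_const_nhds.congr'
      filter_upwards [eventually_ge_atTop ξ₀] with ξ hξ
      rw [hzero ξ hξ]; simp
    exact one_ne_zero (tendsto_nhds_unique htop habs0)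
  -- conclusion
  have hmono : StrictMono m :=
    strictMono_of_deriv_pos fun ξ => by
      rw [(hmd ξ).deriv]; exact hp_pos ξ
  have habs_eq : ∀ ξ, ‖B ξ‖ = Real.sqrt (m ξ) := by
    intro ξ
    rw [Complex.norm_def, Complex.normSq_apply]
    congr 1
    simp [hm_def]; ring
  have hm_pos : ∀ ξ, 0 < m ξ := by
    intro ξ
    have h1 : m (ξ - 1) < m ξ := hmono (by linarith)
    have h2 : 0 ≤ m (ξ - 1) := hm_nonneg _
    linarith
  constructor
  · intro ξ hξ0
    have := hm_pos ξ
    rw [hm_def] at this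
    simp [hξ0] at this
  · intro a b hab
    simp only
    rw [habs_eq a, habs_eq b]
    exact Real.sqrt_lt_sqrt (hm_nonneg a) (hmono hab)
end
end

section
/- Let v and ω be real numbers and let B be a maximal solution of the ODE (E) on an open interval (ξ_min, ξ_max), not identically zero, such that B(ξ₀) = 0 for some ξ₀ in (ξ_min, ξ_max). Then: (1) if v ≤ 0, |B(ξ)| → +∞ as ξ → ξ_max from the left; (2) if v ≥ 0, |B(ξ)| → +∞ as ξ → ξ_min from the right. -/
open Filter Asymptotics MeasureTheory

noncomputable section

/-- The open interval of real numbers between the extended reals `ξmin` and `ξmax`. -/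
def domS (ξmin ξmax : EReal) : Set ℝ := {ξ : ℝ | ξmin < (ξ : EReal) ∧ (ξ : EReal) < ξmax}

/-- `(a, κ, q)` is a solution of system (S) with parameters `v`, `ω` on the set `s`. -/
def IsSolS (v ω : ℝ) (a κ q : ℝ → ℝ) (s : Set ℝ) : Prop :=
  ∀ ξ ∈ s,
    HasDerivAt a (κ ξ * a ξ) ξ ∧
    HasDerivAt κ (-v * κ ξ - (κ ξ) ^ 2 + (q ξ) ^ 2) ξ ∧
    HasDerivAt q (ω - (a ξ) ^ 2 - v * q ξ - 2 * q ξ * κ ξ) ξ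

/-- `(a, κ, q)` is a maximal solution of system (S) on the open interval `(ξmin, ξmax)`:
it cannot be extended to a solution on a strictly larger open interval. -/
def IsMaximalSolS (v ω : ℝ) (a κ q : ℝ → ℝ) (ξmin ξmax : EReal) : Prop :=
  ξmin < ξmax ∧
  IsSolS v ω a κ q (domS ξmin ξmax) ∧
  ∀ ξmin' ξmax' : EReal, ∀ a' κ' q' : ℝ → ℝ,
    ξmin' ≤ ξmin → ξmax ≤ ξmax' →
    IsSolS v ω a' κ' q' (domS ξmin' ξmax') →
    (∀ ξ ∈ domS ξmin ξmax, a' ξ = a ξ ∧ κ' ξ = κ ξ ∧ q' ξ = q ξ) →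
    ξmin' = ξmin ∧ ξmax' = ξmax

/-- The filter of real numbers tending to the extended real `c` from the left. -/
def leftLimF (c : EReal) : Filter ℝ :=
  Filter.comap (fun x : ℝ => (x : EReal)) (nhdsWithin c (Set.Iio c))

/-- The filter of real numbers tending to the extended real `c` from the right. -/
def rightLimF (c : EReal) : Filter ℝ :=
  Filter.comap (fun x : ℝ => (x : EReal)) (nhdsWithin c (Set.Ioi c))

/-- `B` (with derivative `B'`) is a solution of the second order ODE (E) on the set `s`. -/
def IsSolE (v ω : ℝ) (B B' : ℝ → ℂ) (s : Set ℝ) : Prop :=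
  ∀ ξ ∈ s,
    HasDerivAt B (B' ξ) ξ ∧
    HasDerivAt B'
      (-(v : ℂ) * B' ξ + Complex.I * (ω : ℂ) * B ξ
        - Complex.I * (((‖B ξ‖ : ℝ) : ℂ)) ^ 2 * B ξ) ξ

/-- `B` (with derivative `B'`) is a maximal solution of (E) on the open interval
`(ξmin, ξmax)`. -/
def IsMaximalSolE (v ω : ℝ) (B B' : ℝ → ℂ) (ξmin ξmax : EReal) : Prop :=
  ξmin < ξmax ∧
  IsSolE v ω B B' (domS ξmin ξmax) ∧
  ∀ ξmin' ξmax' : EReal, ∀ C C' : ℝ → ℂ,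
    ξmin' ≤ ξmin → ξmax ≤ ξmax' →
    IsSolE v ω C C' (domS ξmin' ξmax') →
    (∀ ξ ∈ domS ξmin ξmax, C ξ = B ξ ∧ C' ξ = B' ξ) →
    ξmin' = ξmin ∧ ξmax' = ξmax

/-- `α(v)`: the real part of the square root of `v² + 4i` with positive real part. -/
def alphaS (v : ℝ) : ℝ := Real.sqrt ((v ^ 2 + Real.sqrt (v ^ 4 + 16)) / 2)

/-- `β(v)`: the imaginary part of the square root of `v² + 4i` with positive real part. -/
def betaS (v : ℝ) : ℝ := 2 / alphaS v

/-- `z₊(v) = (-v + α + iβ)/2`, the root of `z² + vz - i = 0` with positive real part. -/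
def zplus (v : ℝ) : ℂ := (-(v : ℂ) + (alphaS v : ℂ) + (betaS v : ℂ) * Complex.I) / 2

/-- `z₋(v) = (-v - α - iβ)/2`, the root of `z² + vz - i = 0` with negative real part. -/
def zminus (v : ℝ) : ℂ := (-(v : ℂ) - (alphaS v : ℂ) - (betaS v : ℂ) * Complex.I) / 2

/-! ### Auxiliary development -/

open Set Topology

namespace VanishAux

/-- The autonomous vector field on `ℂ × ℂ` corresponding to equation (E). -/
def pairF (v ω : ℝ) : ℂ × ℂ → ℂ × ℂ := fun p =>
  (p.2, -(v:ℂ)*p.2 + Complex.I*(ω:ℂ)*p.1 - Complex.I*(p.1 * (starRingEnd ℂ) p.1)*p.1)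

lemma contDiff_pairF (v ω : ℝ) : ContDiff ℝ 1 (pairF v ω) := by
  unfold pairF
  have hconj : ContDiff ℝ 1 (fun z : ℂ => (starRingEnd ℂ) z) := Complex.conjCLE.contDiff
  fun_prop

lemma pairF_zero (v ω : ℝ) : pairF v ω 0 = 0 := by simp [pairF]

lemma rhs_eq (v ω : ℝ) (b c : ℂ) :
    -(v:ℂ)*c + Complex.I*(ω:ℂ)*b - Complex.I*(((‖b‖ : ℝ) : ℂ))^2*b = (pairF v ω (b,c)).2 := by
  simp only [pairF]
  rw [← Complex.ofReal_pow, Complex.sq_norm, Complex.mul_conj]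

lemma isSolE_pair {v ω : ℝ} {B B' : ℝ → ℂ} {s : Set ℝ} (h : IsSolE v ω B B' s) :
    ∀ ξ ∈ s, HasDerivAt (fun ξ => (B ξ, B' ξ)) (pairF v ω (B ξ, B' ξ)) ξ := by
  intro ξ hξ
  obtain ⟨h1, h2⟩ := h ξ hξ
  rw [rhs_eq] at h2
  exact h1.prodMk h2

lemma pair_isSolE {v ω : ℝ} {f : ℝ → ℂ × ℂ} {s : Set ℝ}
    (h : ∀ ξ ∈ s, HasDerivAt f (pairF v ω (f ξ)) ξ) :
    IsSolE v ω (fun ξ => (f ξ).1) (fun ξ => (f ξ).2) s := by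
  intro ξ hξ
  have h1 := ((ContinuousLinearMap.fst ℝ ℂ ℂ).hasFDerivAt.comp_hasDerivAt ξ (h ξ hξ))
  have h2 := ((ContinuousLinearMap.snd ℝ ℂ ℂ).hasFDerivAt.comp_hasDerivAt ξ (h ξ hξ))
  refine ⟨h1, ?_⟩
  rw [rhs_eq]
  exact h2

lemma isOpen_domS (ξmin ξmax : EReal) : IsOpen (domS ξmin ξmax) := by
  have : domS ξmin ξmax = ((↑·) : ℝ → EReal) ⁻¹' (Set.Ioo ξmin ξmax) := rfl
  rw [this]
  exact (isOpen_Ioo).preimage continuous_coe_real_ereal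

lemma ordConnected_domS (ξmin ξmax : EReal) : (domS ξmin ξmax).OrdConnected := by
  constructor
  rintro x ⟨hx1, hx2⟩ y ⟨hy1, hy2⟩ z ⟨hz1, hz2⟩
  exact ⟨lt_of_lt_of_le hx1 (EReal.coe_le_coe_iff.2 hz1),
    lt_of_le_of_lt (EReal.coe_le_coe_iff.2 hz2) hy2⟩

lemma convex_domS (ξmin ξmax : EReal) : Convex ℝ (domS ξmin ξmax) := by
  rw [convex_iff_ordConnected]; exact ordConnected_domS _ _

lemma leftLimF_coe (x : ℝ) : leftLimF (x : EReal) = nhdsWithin x (Set.Iio x) := by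
  unfold leftLimF
  rw [nhdsWithin, Filter.comap_inf, Filter.comap_principal, EReal.nhds_coe,
    Filter.comap_map (EReal.coe_injective), nhdsWithin]
  congr 1
  ext y
  simp [EReal.coe_lt_coe_iff]

lemma rightLimF_coe (x : ℝ) : rightLimF (x : EReal) = nhdsWithin x (Set.Ioi x) := by
  unfold rightLimF
  rw [nhdsWithin, Filter.comap_inf, Filter.comap_principal, EReal.nhds_coe,
    Filter.comap_map (EReal.coe_injective), nhdsWithin]
  congr 1
  ext y
  simp [EReal.coe_lt_coe_iff]

lemma leftLimF_top : leftLimF ⊤ = Filter.atTop := by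
  apply le_antisymm
  · intro s hs
    rw [Filter.mem_atTop_sets] at hs
    obtain ⟨a, ha⟩ := hs
    rw [leftLimF, Filter.mem_comap]
    refine ⟨Set.Ioi (a : EReal), ?_, ?_⟩
    · exact mem_nhdsWithin_of_mem_nhds (isOpen_Ioi.mem_nhds (by simp))
    · intro y hy
      have : (a:EReal) < (y:EReal) := hy
      exact ha y (le_of_lt (by exact_mod_cast this))
  · rw [leftLimF]
    rw [← Filter.map_le_iff_le_comap]
    have : Tendsto (fun x : ℝ => (x : EReal)) Filter.atTop (nhdsWithin ⊤ (Set.Iio ⊤)) := by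
      apply tendsto_nhdsWithin_of_tendsto_nhds_of_eventually_within
      · rw [EReal.tendsto_nhds_top_iff_real]
        intro a
        filter_upwards [Filter.eventually_gt_atTop a] with x hx
        exact_mod_cast hx
      · exact Filter.Eventually.of_forall (fun x => EReal.coe_lt_top x)
    exact this

lemma rightLimF_bot : rightLimF ⊥ = Filter.atBot := by
  apply le_antisymm
  · intro s hs
    rw [Filter.mem_atBot_sets] at hs
    obtain ⟨a, ha⟩ := hs
    rw [rightLimF, Filter.mem_comap]
    refine ⟨Set.Iio (a : EReal), ?_, ?_⟩
    · exact mem_nhdsWithin_of_mem_nhds (isOpen_Iio.mem_nhds (by simp))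
    · intro y hy
      have : (y:EReal) < (a:EReal) := hy
      exact ha y (le_of_lt (by exact_mod_cast this))
  · rw [rightLimF, ← Filter.map_le_iff_le_comap]
    have : Tendsto (fun x : ℝ => (x : EReal)) Filter.atBot (nhdsWithin ⊥ (Set.Ioi ⊥)) := by
      apply tendsto_nhdsWithin_of_tendsto_nhds_of_eventually_within
      · rw [EReal.tendsto_nhds_bot_iff_real]
        intro a
        filter_upwards [Filter.eventually_lt_atBot a] with x hx
        exact_mod_cast hx
      · exact Filter.Eventually.of_forall (fun x => EReal.bot_lt_coe x)
    exact this

lemma pair_zero_propagation {v ω : ℝ} {f : ℝ → ℂ × ℂ} {s : Set ℝ}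
    (hs : IsOpen s) (hconn : IsPreconnected s)
    (hf : ∀ ξ ∈ s, HasDerivAt f (pairF v ω (f ξ)) ξ)
    {ξ₀ : ℝ} (hξ₀ : ξ₀ ∈ s) (h0 : f ξ₀ = 0) :
    ∀ ξ ∈ s, f ξ = 0 := by
  classical
  set U : Set ℝ := {ξ ∈ s | f ξ = 0} with hU
  set V : Set ℝ := {ξ ∈ s | f ξ ≠ 0} with hV
  have hcont : ∀ ξ ∈ s, ContinuousAt f ξ := fun ξ hξ => (hf ξ hξ).continuousAt
  obtain ⟨K, t, ht, hlip⟩ := ((contDiff_pairF v ω).contDiffAt (x := 0)).exists_lipschitzOnWith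
  have hUopen : IsOpen U := by
    rw [isOpen_iff_mem_nhds]
    rintro ζ ⟨hζs, hζ0⟩
    have htζ : t ∈ 𝓝 (f ζ) := by rw [hζ0]; exact ht
    have h1 : ∀ᶠ ξ in 𝓝 ζ, ξ ∈ s := hs.mem_nhds hζs
    have h2 : ∀ᶠ ξ in 𝓝 ζ, f ξ ∈ t := (hcont ζ hζs).preimage_mem_nhds htζ
    obtain ⟨ε, hε, hball⟩ := Metric.eventually_nhds_iff_ball.mp (h1.and h2)
    have heq : EqOn f (fun _ => (0 : ℂ × ℂ)) (Ioo (ζ - ε) (ζ + ε)) := by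
      apply ODE_solution_unique_of_mem_Ioo (v := fun _ => pairF v ω) (s := fun _ => t)
        (fun _ _ => hlip) (Real.ball_eq_Ioo ζ ε ▸ Metric.mem_ball_self hε)
      · intro τ hτ
        rw [← Real.ball_eq_Ioo] at hτ
        exact ⟨hf τ (hball τ hτ).1, (hball τ hτ).2⟩
      · intro τ hτ
        refine ⟨by simpa [pairF_zero] using hasDerivAt_const τ (0 : ℂ × ℂ), ?_⟩
        rw [← hζ0]
        rw [← Real.ball_eq_Ioo] at hτ
        exact (hball ζ (Metric.mem_ball_self hε)).2
      · exact hζ0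
    apply Filter.mem_of_superset (Ioo_mem_nhds (by linarith) (by linarith) :
      Ioo (ζ - ε) (ζ + ε) ∈ 𝓝 ζ)
    intro τ hτ
    have hτ' := hτ
    rw [← Real.ball_eq_Ioo] at hτ'
    exact ⟨(hball τ hτ').1, heq hτ⟩
  have hVopen : IsOpen V := by
    rw [isOpen_iff_mem_nhds]
    rintro ζ ⟨hζs, hζ0⟩
    have h1 : ∀ᶠ ξ in 𝓝 ζ, ξ ∈ s := hs.mem_nhds hζs
    have h2 : ∀ᶠ ξ in 𝓝 ζ, f ξ ≠ 0 := (hcont ζ hζs).eventually_ne hζ0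
    filter_upwards [h1, h2] with ξ hξ1 hξ2
    exact ⟨hξ1, hξ2⟩
  have hsub : s ⊆ U := by
    apply hconn.subset_left_of_subset_union hUopen hVopen
    · rw [Set.disjoint_iff]
      rintro ξ ⟨⟨_, h1⟩, ⟨_, h2⟩⟩
      exact h2 h1
    · intro ξ hξ
      by_cases h : f ξ = 0
      · exact Or.inl ⟨hξ, h⟩
      · exact Or.inr ⟨hξ, h⟩
    · exact ⟨ξ₀, hξ₀, hξ₀, h0⟩
  exact fun ξ hξ => (hsub hξ).2

/-! ### The scalar quantities -/

def Rq (B B' : ℝ → ℂ) : ℝ → ℝ := fun ξ => ((starRingEnd ℂ) (B ξ) * B' ξ).re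
def Pq (B : ℝ → ℂ) : ℝ → ℝ := fun ξ => Complex.normSq (B ξ)
def gq (v : ℝ) (B B' : ℝ → ℂ) : ℝ → ℝ := fun ξ => Real.exp (v * ξ) * Rq B B' ξ

variable {v ω : ℝ} {B B' : ℝ → ℂ} {ξ : ℝ}

lemma hasDerivAt_Rq (h1 : HasDerivAt B (B' ξ) ξ)
    (h2 : HasDerivAt B' (-(v : ℂ) * B' ξ + Complex.I * (ω : ℂ) * B ξ
        - Complex.I * (((‖B ξ‖ : ℝ) : ℂ)) ^ 2 * B ξ) ξ) :
    HasDerivAt (Rq B B') (Complex.normSq (B' ξ) - v * Rq B B' ξ) ξ := by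
  have habs : (((‖B ξ‖ : ℝ) : ℂ))^2 = B ξ * (starRingEnd ℂ) (B ξ) := by
    rw [← Complex.ofReal_pow, Complex.sq_norm, Complex.mul_conj]
  rw [habs] at h2
  have hc : HasDerivAt (fun ξ => (starRingEnd ℂ) (B ξ)) ((starRingEnd ℂ) (B' ξ)) ξ := h1.star
  have hm := hc.mul h2
  have h3 := Complex.reCLM.hasFDerivAt.comp_hasDerivAt ξ hm
  have h4 : HasDerivAt (Rq B B')
      (Complex.reCLM ((starRingEnd ℂ) (B' ξ) * B' ξ + (starRingEnd ℂ) (B ξ) *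
        (-(v:ℂ) * B' ξ + Complex.I * (ω:ℂ) * B ξ
          - Complex.I * (B ξ * (starRingEnd ℂ) (B ξ)) * B ξ))) ξ := h3
  convert h4 using 1
  simp [Complex.reCLM_apply, Rq, Complex.normSq_apply, Complex.mul_re, Complex.mul_im]
  ring

lemma hasDerivAt_Pq (h1 : HasDerivAt B (B' ξ) ξ) :
    HasDerivAt (Pq B) (2 * Rq B B' ξ) ξ := by
  have hc : HasDerivAt (fun ξ => (starRingEnd ℂ) (B ξ)) ((starRingEnd ℂ) (B' ξ)) ξ := h1.star
  have hm := hc.mul h1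
  have h3 := Complex.reCLM.hasFDerivAt.comp_hasDerivAt ξ hm
  have h4 : HasDerivAt (fun ζ => ((starRingEnd ℂ) (B ζ) * B ζ).re)
      (Complex.reCLM ((starRingEnd ℂ) (B' ξ) * B ξ + (starRingEnd ℂ) (B ξ) * B' ξ)) ξ := h3
  have heq : (fun ζ => ((starRingEnd ℂ) (B ζ) * B ζ).re) = Pq B := by
    funext ζ
    simp [Pq, Complex.normSq_apply, Complex.mul_re]
  rw [heq] at h4
  convert h4 using 1
  simp [Complex.reCLM_apply, Rq, Complex.mul_re]
  ring

lemma hasDerivAt_gq (h1 : HasDerivAt B (B' ξ) ξ)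
    (h2 : HasDerivAt B' (-(v : ℂ) * B' ξ + Complex.I * (ω : ℂ) * B ξ
        - Complex.I * (((‖B ξ‖ : ℝ) : ℂ)) ^ 2 * B ξ) ξ) :
    HasDerivAt (gq v B B') (Real.exp (v * ξ) * Complex.normSq (B' ξ)) ξ := by
  have he : HasDerivAt (fun ξ : ℝ => Real.exp (v * ξ)) (v * Real.exp (v * ξ)) ξ := by
    have := (Real.hasDerivAt_exp (v * ξ)).comp ξ ((hasDerivAt_id ξ).const_mul v)
    simpa [mul_comm, Function.comp_def] using this
  have hR := hasDerivAt_Rq h1 h2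
  have := he.mul hR
  exact this.congr_deriv (by ring)

lemma norm_pairF_le (v ω L : ℝ) (p : ℂ × ℂ) (hp : Complex.normSq p.1 ≤ L) :
    ‖pairF v ω p‖ ≤ (1 + |v| + |ω| + L) * ‖p‖ := by
  have h1 : ‖p.1‖ ≤ ‖p‖ := norm_fst_le p
  have h2 : ‖p.2‖ ≤ ‖p‖ := norm_snd_le p
  have hL : 0 ≤ L := le_trans (Complex.normSq_nonneg _) hp
  have hnn : (0:ℝ) ≤ ‖p‖ := norm_nonneg _
  rw [pairF, Prod.norm_def]
  apply max_le
  · calc ‖p.2‖ ≤ ‖p‖ := h2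
      _ ≤ (1 + |v| + |ω| + L) * ‖p‖ := by nlinarith [abs_nonneg v, abs_nonneg ω]
  · have e1 : ‖-(v:ℂ)*p.2‖ = |v| * ‖p.2‖ := by
      rw [norm_mul, norm_neg, Complex.norm_real, Real.norm_eq_abs]
    have e2 : ‖Complex.I*(ω:ℂ)*p.1‖ = |ω| * ‖p.1‖ := by
      rw [norm_mul, norm_mul, Complex.norm_I, one_mul, Complex.norm_real, Real.norm_eq_abs]
    have e3 : ‖Complex.I*(p.1 * (starRingEnd ℂ) p.1)*p.1‖ = Complex.normSq p.1 * ‖p.1‖ := by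
      rw [norm_mul, norm_mul, Complex.norm_I, one_mul, Complex.mul_conj]
      simp [Complex.normSq_nonneg]
    calc ‖-(v:ℂ)*p.2 + Complex.I*(ω:ℂ)*p.1 - Complex.I*(p.1 * (starRingEnd ℂ) p.1)*p.1‖
        ≤ ‖-(v:ℂ)*p.2 + Complex.I*(ω:ℂ)*p.1‖ + ‖Complex.I*(p.1 * (starRingEnd ℂ) p.1)*p.1‖ :=
          norm_sub_le _ _
      _ ≤ ‖-(v:ℂ)*p.2‖ + ‖Complex.I*(ω:ℂ)*p.1‖ + ‖Complex.I*(p.1 * (starRingEnd ℂ) p.1)*p.1‖ := by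
          have := norm_add_le (-(v:ℂ)*p.2) (Complex.I*(ω:ℂ)*p.1); linarith
      _ = |v| * ‖p.2‖ + |ω| * ‖p.1‖ + Complex.normSq p.1 * ‖p.1‖ := by rw [e1, e2, e3]
      _ ≤ |v| * ‖p‖ + |ω| * ‖p‖ + L * ‖p‖ := by
          have h3 : Complex.normSq p.1 * ‖p.1‖ ≤ L * ‖p‖ := by
            apply mul_le_mul hp h1 (norm_nonneg _) hL
          have h4 : |v| * ‖p.2‖ ≤ |v| * ‖p‖ := mul_le_mul_of_nonneg_left h2 (abs_nonneg v)
          have h5 : |ω| * ‖p.1‖ ≤ |ω| * ‖p‖ := mul_le_mul_of_nonneg_left h1 (abs_nonneg ω)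
          linarith
      _ ≤ (1 + |v| + |ω| + L) * ‖p‖ := by nlinarith

end VanishAux

namespace VanishAux

/-- If the pair solution stays bounded near a *finite* right endpoint of a maximal solution,
we get a contradiction. -/
lemma bounded_extends_right {v ω : ℝ} {B B' : ℝ → ℂ} {ξmin ξmax : EReal}
    (hmax : IsMaximalSolE v ω B B' ξmin ξmax)
    {x ξ₁ : ℝ} (hx : ξmax = (x : EReal)) (hξ₁ : ξ₁ ∈ domS ξmin ξmax)
    {Cb : ℝ} (hCb : ∀ ξ ∈ Ico ξ₁ x, ‖(B ξ, B' ξ)‖ ≤ Cb) : False := by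
  classical
  set fp : ℝ → ℂ × ℂ := fun ξ => (B ξ, B' ξ) with hfp
  have hξ₁x : ξ₁ < x := by
    have := hξ₁.2; rw [hx] at this; exact_mod_cast this
  have hdom : ∀ ξ : ℝ, ξ₁ ≤ ξ → ξ < x → ξ ∈ domS ξmin ξmax := by
    intro ξ h1 h2
    refine ⟨lt_of_lt_of_le hξ₁.1 (EReal.coe_le_coe_iff.2 h1), ?_⟩
    rw [hx]; exact_mod_cast h2
  have hder : ∀ ξ ∈ domS ξmin ξmax, HasDerivAt fp (pairF v ω (fp ξ)) ξ :=
    isSolE_pair hmax.2.1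
  have hCb0 : 0 ≤ Cb := le_trans (norm_nonneg _) (hCb ξ₁ ⟨le_refl _, hξ₁x⟩)
  -- uniform bound on the derivative
  set C₂ : ℝ := (1 + |v| + |ω| + Cb^2) * Cb with hC₂
  have hC₂0 : 0 ≤ C₂ := by positivity
  have hFbound : ∀ ξ ∈ Ico ξ₁ x, ‖pairF v ω (fp ξ)‖ ≤ C₂ := by
    intro ξ hξ
    have h1 : Complex.normSq ((fp ξ).1) ≤ Cb^2 := by
      rw [Complex.normSq_eq_norm_sq]
      have : ‖(fp ξ).1‖ ≤ Cb := le_trans (norm_fst_le _) (hCb ξ hξ)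
      nlinarith [norm_nonneg ((fp ξ).1)]
    calc ‖pairF v ω (fp ξ)‖ ≤ (1 + |v| + |ω| + Cb^2) * ‖fp ξ‖ := norm_pairF_le v ω _ _ h1
      _ ≤ C₂ := by
          have := hCb ξ hξ
          have h2 : (0:ℝ) ≤ 1 + |v| + |ω| + Cb^2 := by positivity
          nlinarith
  -- Lipschitz estimate on [ξ₁, x)
  have hlipf : ∀ s ∈ Ico ξ₁ x, ∀ t ∈ Ico ξ₁ x, ‖fp t - fp s‖ ≤ C₂ * ‖t - s‖ := by
    intro s hs t ht
    apply Convex.norm_image_sub_le_of_norm_hasDerivWithin_le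
      (f' := fun ξ => pairF v ω (fp ξ))
      (fun ξ hξ => (hder ξ (hdom ξ hξ.1 hξ.2)).hasDerivWithinAt) hFbound
      (convex_Ico ξ₁ x) hs ht
  -- existence of the limit at x
  have hIooIio : 𝓝[Iio x] x = 𝓝[Ioo ξ₁ x] x := (nhdsWithin_Ioo_eq_nhdsLT hξ₁x).symm
  have hcauchy : Cauchy (Filter.map fp (𝓝[Iio x] x)) := by
    rw [Metric.cauchy_iff]
    constructor
    · exact Filter.map_neBot
    · intro ε hε
      set δ : ℝ := ε / (2 * (C₂ + 1)) with hδ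
      have hδ0 : 0 < δ := by positivity
      refine ⟨fp '' (Ioo (max ξ₁ (x - δ)) x), Filter.image_mem_map ?_, ?_⟩
      · apply Ioo_mem_nhdsLT_of_mem
        constructor
        · apply max_lt hξ₁x (by linarith)
        · exact le_refl x
      · rintro _ ⟨s, hs, rfl⟩ _ ⟨t, ht, rfl⟩
        have hs' : s ∈ Ico ξ₁ x := ⟨le_trans (le_max_left _ _) hs.1.le, hs.2⟩
        have ht' : t ∈ Ico ξ₁ x := ⟨le_trans (le_max_left _ _) ht.1.le, ht.2⟩
        have hst : ‖t - s‖ ≤ δ := by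
          rw [Real.norm_eq_abs, abs_le]
          have h1 := le_max_right ξ₁ (x - δ)
          constructor <;> nlinarith [hs.1, hs.2, ht.1, ht.2,
            lt_of_le_of_lt (le_max_right ξ₁ (x-δ)) hs.1, lt_of_le_of_lt (le_max_right ξ₁ (x-δ)) ht.1]
        calc dist (fp s) (fp t) = ‖fp t - fp s‖ := by rw [dist_eq_norm, norm_sub_rev]
          _ ≤ C₂ * ‖t - s‖ := hlipf s hs' t ht'
          _ ≤ C₂ * δ := mul_le_mul_of_nonneg_left hst hC₂0
          _ < ε := by
              have h2C : (0:ℝ) < 2*(C₂+1) := by positivity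
              rw [hδ, mul_div_assoc', div_lt_iff₀ h2C]
              nlinarith
  obtain ⟨y₀, hy₀⟩ := CompleteSpace.complete hcauchy
  have htend : Tendsto fp (𝓝[Iio x] x) (𝓝 y₀) := hy₀
  -- local solution through (x, y₀)
  obtain ⟨g, hgx, ε, hε, hg⟩ :=
    ContDiffAt.exists_forall_mem_closedBall_exists_eq_forall_mem_Ioo_hasDerivAt₀ ((contDiff_pairF v ω).contDiffAt (x := y₀)) x
  -- Lipschitz neighbourhood of y₀
  obtain ⟨K, tset, htset, hlip⟩ :=
    ((contDiff_pairF v ω).contDiffAt (x := y₀)).exists_lipschitzOnWith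
  -- the extension of fp by its limit value
  set fbar : ℝ → ℂ × ℂ := fun ξ => if ξ = x then y₀ else fp ξ with hfbar
  have hfbar_eq : ∀ ξ ∈ Iio x, fbar ξ = fp ξ := by
    intro ξ hξ; simp only [hfbar]; rw [if_neg (ne_of_lt hξ)]
  have hfbarx : fbar x = y₀ := by simp [hfbar]
  have hfbar_eqF : fbar =ᶠ[𝓝[Iio x] x] fp :=
    Filter.eventually_iff_exists_mem.2 ⟨Iio x, self_mem_nhdsWithin, hfbar_eq⟩
  have htend_bar : Tendsto fbar (𝓝[Iio x] x) (𝓝 y₀) := htend.congr' hfbar_eqF.symm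
  -- choose m close to x
  have hgcont : ContinuousAt g x :=
    (hg x (by constructor <;> linarith)).continuousAt
  have h2 : ∀ᶠ ξ in 𝓝 x, g ξ ∈ tset := by
    apply hgcont.preimage_mem_nhds
    rw [hgx]; exact htset
  obtain ⟨r, hr, hball2⟩ := Metric.eventually_nhds_iff_ball.mp h2
  have h1 : ∀ᶠ ξ in 𝓝[Iio x] x, fp ξ ∈ tset := htend.eventually_mem htset
  obtain ⟨b, hbx, hIb⟩ := mem_nhdsLT_iff_exists_Ioo_subset.1 h1
  set m : ℝ := (max (max b ξ₁) (x - min r (min ε (x - ξ₁))) + x)/2 with hm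
  have hmin0 : 0 < min r (min ε (x - ξ₁)) := by
    apply lt_min hr; apply lt_min hε; linarith
  have hmlt : max (max b ξ₁) (x - min r (min ε (x - ξ₁))) < x := by
    apply max_lt
    · apply max_lt
      · exact hbx
      · exact hξ₁x
    · linarith
  have hmx : m < x := by rw [hm]; linarith
  have hmb : b < m := by
    have := le_max_left (max b ξ₁) (x - min r (min ε (x - ξ₁)))
    have := le_max_left b ξ₁
    rw [hm]; nlinarith [le_trans (le_max_left b ξ₁) (le_max_left (max b ξ₁) (x - min r (min ε (x - ξ₁))))]
  have hmξ₁ : ξ₁ < m := by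
    rw [hm]; nlinarith [le_trans (le_max_right b ξ₁) (le_max_left (max b ξ₁) (x - min r (min ε (x - ξ₁))))]
  have hmr : x - r < m := by
    have h := le_max_right (max b ξ₁) (x - min r (min ε (x - ξ₁)))
    have : x - r ≤ x - min r (min ε (x - ξ₁)) := by
      have := min_le_left r (min ε (x - ξ₁)); linarith
    rw [hm]; nlinarith
  have hmε : x - ε < m := by
    have h := le_max_right (max b ξ₁) (x - min r (min ε (x - ξ₁)))
    have : x - ε ≤ x - min r (min ε (x - ξ₁)) := by
      have := le_trans (min_le_right r (min ε (x - ξ₁))) (min_le_left ε (x - ξ₁))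
      linarith
    rw [hm]; nlinarith
  -- fbar is continuous on [m, x]
  have hfbar_cont : ContinuousOn fbar (Icc m x) := by
    intro t ht
    rcases lt_or_eq_of_le ht.2 with h | h
    · have : ContinuousAt fbar t := by
        have : fbar =ᶠ[𝓝 t] fp :=
          Filter.eventually_iff_exists_mem.2 ⟨Iio x, Iio_mem_nhds h, hfbar_eq⟩
        rw [continuousAt_congr this]
        exact (hder t (hdom t (le_trans hmξ₁.le ht.1) h)).continuousAt
      exact this.continuousWithinAt
    · rw [h]
      rw [← continuousWithinAt_diff_self]
      have hsub : Icc m x \ {x} ⊆ Iio x := fun ζ hζ =>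
        lt_of_le_of_ne hζ.1.2 (by simpa using hζ.2)
      rw [ContinuousWithinAt, hfbarx]
      exact htend_bar.mono_left (nhdsWithin_mono _ hsub)
  -- fbar solves the ODE on Ioc m x (with one-sided derivative at x)
  have hfbar_deriv : ∀ t ∈ Ioc m x, HasDerivWithinAt fbar (pairF v ω (fbar t)) (Iic t) t := by
    intro t ht
    rcases lt_or_eq_of_le ht.2 with h | h
    · have heq : fbar =ᶠ[𝓝 t] fp :=
        Filter.eventually_iff_exists_mem.2 ⟨Iio x, Iio_mem_nhds h, hfbar_eq⟩
      have : HasDerivAt fbar (pairF v ω (fp t)) t := by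
        rw [Filter.EventuallyEq.hasDerivAt_iff heq]
        exact hder t (hdom t (le_trans hmξ₁.le ht.1.le) h)
      rw [hfbar_eq t h]
      exact this.hasDerivWithinAt
    · rw [h]
      rw [hfbarx]
      apply hasDerivWithinAt_Iic_of_tendsto_deriv (s := Ioo m x)
      · intro ζ hζ
        have heq : fbar =ᶠ[𝓝 ζ] fp :=
          Filter.eventually_iff_exists_mem.2 ⟨Iio x, Iio_mem_nhds hζ.2, hfbar_eq⟩
        have : HasDerivAt fbar (pairF v ω (fp ζ)) ζ := by
          rw [Filter.EventuallyEq.hasDerivAt_iff heq]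
          exact hder ζ (hdom ζ (le_trans hmξ₁.le hζ.1.le) hζ.2)
        exact this.differentiableAt.differentiableWithinAt
      · have hsub : Ioo m x ⊆ Iio x := Ioo_subset_Iio_self
        rw [ContinuousWithinAt, hfbarx]
        exact htend_bar.mono_left (nhdsWithin_mono _ hsub)
      · exact Ioo_mem_nhdsLT_of_mem ⟨hmx, le_refl x⟩
      · -- deriv fbar tends to pairF v ω y₀
        have hderiv_eq : ∀ᶠ ζ in 𝓝[<] x, deriv fbar ζ = pairF v ω (fp ζ) := by
          rw [eventually_nhdsWithin_iff]
          filter_upwards [Ioi_mem_nhds hmx] with ζ hζ1 hζ2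
          have heq : fbar =ᶠ[𝓝 ζ] fp :=
            Filter.eventually_iff_exists_mem.2 ⟨Iio x, Iio_mem_nhds hζ2, hfbar_eq⟩
          have : HasDerivAt fbar (pairF v ω (fp ζ)) ζ := by
            rw [Filter.EventuallyEq.hasDerivAt_iff heq]
            exact hder ζ (hdom ζ (le_trans hmξ₁.le (le_of_lt hζ1)) hζ2)
          exact this.deriv
        have htendF : Tendsto (fun ζ => pairF v ω (fp ζ)) (𝓝[<] x) (𝓝 (pairF v ω y₀)) :=
          ((contDiff_pairF v ω).continuous.continuousAt.tendsto).comp htend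
        exact Tendsto.congr' (Filter.EventuallyEq.symm hderiv_eq) htendF
  -- g solves the ODE on Icc m x as well; glue by uniqueness
  have hIccsub : Icc m x ⊆ Ioo (x - ε) (x + ε) := by
    intro ζ hζ
    constructor
    · linarith [hζ.1]
    · linarith [hζ.2]
  have hgl : EqOn fbar g (Icc m x) := by
    apply ODE_solution_unique_of_mem_Icc_left (v := fun _ => pairF v ω) (s := fun _ => tset)
      (fun _ _ => hlip) hfbar_cont hfbar_deriv
    · -- fbar t ∈ tset on Ioc m x
      intro t ht
      rcases lt_or_eq_of_le ht.2 with h | h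
      · rw [hfbar_eq t h]
        exact hIb ⟨lt_trans hmb ht.1, h⟩
      · rw [h, hfbarx]
        exact mem_of_mem_nhds htset
    · exact fun t ht => ((hg t (hIccsub ht)).continuousAt).continuousWithinAt
    · exact fun t ht => (hg t (hIccsub (Ioc_subset_Icc_self ht))).hasDerivWithinAt
    · intro t ht
      apply hball2
      rw [Metric.mem_ball, Real.dist_eq, abs_lt]
      constructor
      · have := ht.1; linarith
      · have := ht.2; linarith
    · rw [hfbarx, hgx]
  -- define the extension and contradict maximality
  set η : ℝ := min (x - m) ε with hη
  have hη0 : 0 < η := lt_min (by linarith) hε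
  set y : ℝ := x + η/2 with hy
  have hxy : x < y := by rw [hy]; linarith
  set Cp : ℝ → ℂ × ℂ := fun ξ => if ξ < x then fp ξ else g ξ with hCp
  have hCp_left : ∀ ξ < x, Cp ξ = fp ξ := by
    intro ξ h; simp only [hCp]; rw [if_pos h]
  have hCp_g : ∀ ξ ∈ Ioo (x - η) (x + η), Cp ξ = g ξ := by
    intro ξ hξ
    rcases lt_or_ge ξ x with h | h
    · rw [hCp_left ξ h]
      have hξIcc : ξ ∈ Icc m x := by
        constructor
        · have := min_le_left (x - m) ε
          have := hξ.1
          linarith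
        · exact h.le
      rw [← hgl hξIcc, hfbar_eq ξ h]
    · simp only [hCp]; rw [if_neg (not_lt.2 h)]
  have hsolC : ∀ ξ ∈ domS ξmin ((y : ℝ) : EReal), HasDerivAt Cp (pairF v ω (Cp ξ)) ξ := by
    intro ξ hξ
    rcases lt_or_ge ξ x with h | h
    · have heq : Cp =ᶠ[𝓝 ξ] fp :=
        Filter.eventually_iff_exists_mem.2 ⟨Iio x, Iio_mem_nhds h, hCp_left⟩
      rw [Filter.EventuallyEq.hasDerivAt_iff heq, hCp_left ξ h]
      apply hder
      refine ⟨hξ.1, ?_⟩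
      rw [hx]; exact_mod_cast h
    · have hξy : ξ < y := by
        have := hξ.2
        exact_mod_cast this
      have hξmem : ξ ∈ Ioo (x - η) (x + η) := by
        constructor
        · linarith
        · rw [hy] at hξy; linarith
      have heq : Cp =ᶠ[𝓝 ξ] g :=
        Filter.eventually_iff_exists_mem.2 ⟨Ioo (x - η) (x + η), Ioo_mem_nhds hξmem.1 hξmem.2, hCp_g⟩
      rw [Filter.EventuallyEq.hasDerivAt_iff heq, hCp_g ξ hξmem]
      apply hg
      constructor
      · have := min_le_right (x - m) ε
        have := hξmem.1
        linarith
      · have := min_le_right (x - m) ε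
        have := hξmem.2
        linarith
  have hsolE' : IsSolE v ω (fun ξ => (Cp ξ).1) (fun ξ => (Cp ξ).2) (domS ξmin ((y:ℝ):EReal)) :=
    pair_isSolE hsolC
  have hagree : ∀ ξ ∈ domS ξmin ξmax, (Cp ξ).1 = B ξ ∧ (Cp ξ).2 = B' ξ := by
    intro ξ hξ
    have hξx : ξ < x := by
      have := hξ.2; rw [hx] at this; exact_mod_cast this
    rw [hCp_left ξ hξx]
    exact ⟨rfl, rfl⟩
  have := hmax.2.2 ξmin ((y:ℝ):EReal) _ _ (le_refl _)
    (by rw [hx]; exact_mod_cast hxy.le) hsolE' hagree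
  have hyx : ((y:ℝ):EReal) = ((x:ℝ):EReal) := by rw [this.2, hx]
  have : y = x := by exact_mod_cast hyx
  linarith

end VanishAux

namespace VanishAux

/-- If the pair solution stays bounded near a *finite* left endpoint of a maximal solution,
we get a contradiction. -/
lemma bounded_extends_left {v ω : ℝ} {B B' : ℝ → ℂ} {ξmin ξmax : EReal}
    (hmax : IsMaximalSolE v ω B B' ξmin ξmax)
    {x ξ₁ : ℝ} (hx : ξmin = (x : EReal)) (hξ₁ : ξ₁ ∈ domS ξmin ξmax)
    {Cb : ℝ} (hCb : ∀ ξ ∈ Ioc x ξ₁, ‖(B ξ, B' ξ)‖ ≤ Cb) : False := by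
  classical
  set fp : ℝ → ℂ × ℂ := fun ξ => (B ξ, B' ξ) with hfp
  have hξ₁x : x < ξ₁ := by
    have := hξ₁.1; rw [hx] at this; exact_mod_cast this
  have hdom : ∀ ξ : ℝ, x < ξ → ξ ≤ ξ₁ → ξ ∈ domS ξmin ξmax := by
    intro ξ h1 h2
    refine ⟨?_, lt_of_le_of_lt (EReal.coe_le_coe_iff.2 h2) hξ₁.2⟩
    rw [hx]; exact_mod_cast h1
  have hder : ∀ ξ ∈ domS ξmin ξmax, HasDerivAt fp (pairF v ω (fp ξ)) ξ :=
    isSolE_pair hmax.2.1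
  have hCb0 : 0 ≤ Cb := le_trans (norm_nonneg _) (hCb ξ₁ ⟨hξ₁x, le_refl _⟩)
  set C₂ : ℝ := (1 + |v| + |ω| + Cb^2) * Cb with hC₂
  have hC₂0 : 0 ≤ C₂ := by positivity
  have hFbound : ∀ ξ ∈ Ioc x ξ₁, ‖pairF v ω (fp ξ)‖ ≤ C₂ := by
    intro ξ hξ
    have h1 : Complex.normSq ((fp ξ).1) ≤ Cb^2 := by
      rw [Complex.normSq_eq_norm_sq]
      have : ‖(fp ξ).1‖ ≤ Cb := le_trans (norm_fst_le _) (hCb ξ hξ)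
      nlinarith [norm_nonneg ((fp ξ).1)]
    calc ‖pairF v ω (fp ξ)‖ ≤ (1 + |v| + |ω| + Cb^2) * ‖fp ξ‖ := norm_pairF_le v ω _ _ h1
      _ ≤ C₂ := by
          have := hCb ξ hξ
          have h2 : (0:ℝ) ≤ 1 + |v| + |ω| + Cb^2 := by positivity
          nlinarith
  have hlipf : ∀ s ∈ Ioc x ξ₁, ∀ t ∈ Ioc x ξ₁, ‖fp t - fp s‖ ≤ C₂ * ‖t - s‖ := by
    intro s hs t ht
    apply Convex.norm_image_sub_le_of_norm_hasDerivWithin_le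
      (f' := fun ξ => pairF v ω (fp ξ))
      (fun ξ hξ => (hder ξ (hdom ξ hξ.1 hξ.2)).hasDerivWithinAt) hFbound
      (convex_Ioc x ξ₁) hs ht
  have hcauchy : Cauchy (Filter.map fp (𝓝[Ioi x] x)) := by
    rw [Metric.cauchy_iff]
    constructor
    · exact Filter.map_neBot
    · intro ε hε
      set δ : ℝ := ε / (2 * (C₂ + 1)) with hδ
      have hδ0 : 0 < δ := by positivity
      refine ⟨fp '' (Ioo x (min ξ₁ (x + δ))), Filter.image_mem_map ?_, ?_⟩
      · apply Ioo_mem_nhdsGT_of_mem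
        constructor
        · exact le_refl x
        · apply lt_min hξ₁x (by linarith)
      · rintro _ ⟨s, hs, rfl⟩ _ ⟨t, ht, rfl⟩
        have hs' : s ∈ Ioc x ξ₁ := ⟨hs.1, le_trans hs.2.le (min_le_left _ _)⟩
        have ht' : t ∈ Ioc x ξ₁ := ⟨ht.1, le_trans ht.2.le (min_le_left _ _)⟩
        have hst : ‖t - s‖ ≤ δ := by
          rw [Real.norm_eq_abs, abs_le]
          constructor <;> nlinarith [hs.1, ht.1,
            lt_of_lt_of_le hs.2 (min_le_right ξ₁ (x+δ)), lt_of_lt_of_le ht.2 (min_le_right ξ₁ (x+δ))]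
        calc dist (fp s) (fp t) = ‖fp t - fp s‖ := by rw [dist_eq_norm, norm_sub_rev]
          _ ≤ C₂ * ‖t - s‖ := hlipf s hs' t ht'
          _ ≤ C₂ * δ := mul_le_mul_of_nonneg_left hst hC₂0
          _ < ε := by
              have h2C : (0:ℝ) < 2*(C₂+1) := by positivity
              rw [hδ, mul_div_assoc', div_lt_iff₀ h2C]
              nlinarith
  obtain ⟨y₀, hy₀⟩ := CompleteSpace.complete hcauchy
  have htend : Tendsto fp (𝓝[Ioi x] x) (𝓝 y₀) := hy₀
  obtain ⟨g, hgx, ε, hε, hg⟩ :=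
    ContDiffAt.exists_forall_mem_closedBall_exists_eq_forall_mem_Ioo_hasDerivAt₀ ((contDiff_pairF v ω).contDiffAt (x := y₀)) x
  obtain ⟨K, tset, htset, hlip⟩ :=
    ((contDiff_pairF v ω).contDiffAt (x := y₀)).exists_lipschitzOnWith
  set fbar : ℝ → ℂ × ℂ := fun ξ => if ξ = x then y₀ else fp ξ with hfbar
  have hfbar_eq : ∀ ξ ∈ Ioi x, fbar ξ = fp ξ := by
    intro ξ hξ; simp only [hfbar]; rw [if_neg (ne_of_gt hξ)]
  have hfbarx : fbar x = y₀ := by simp [hfbar]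
  have hfbar_eqF : fbar =ᶠ[𝓝[Ioi x] x] fp :=
    Filter.eventually_iff_exists_mem.2 ⟨Ioi x, self_mem_nhdsWithin, hfbar_eq⟩
  have htend_bar : Tendsto fbar (𝓝[Ioi x] x) (𝓝 y₀) := htend.congr' hfbar_eqF.symm
  have hgcont : ContinuousAt g x :=
    (hg x (by constructor <;> linarith)).continuousAt
  have h2 : ∀ᶠ ξ in 𝓝 x, g ξ ∈ tset := by
    apply hgcont.preimage_mem_nhds
    rw [hgx]; exact htset
  obtain ⟨r, hr, hball2⟩ := Metric.eventually_nhds_iff_ball.mp h2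
  have h1 : ∀ᶠ ξ in 𝓝[Ioi x] x, fp ξ ∈ tset := htend.eventually_mem htset
  obtain ⟨b, hbx, hIb⟩ := mem_nhdsGT_iff_exists_Ioo_subset.1 h1
  set m : ℝ := (min (min b ξ₁) (x + min r (min ε (ξ₁ - x))) + x)/2 with hm
  have hmin0 : 0 < min r (min ε (ξ₁ - x)) := by
    apply lt_min hr; apply lt_min hε; linarith
  have hmgt : x < min (min b ξ₁) (x + min r (min ε (ξ₁ - x))) := by
    apply lt_min
    · apply lt_min
      · exact hbx
      · exact hξ₁x
    · linarith
  have hmx : x < m := by rw [hm]; linarith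
  have hmb : m < b := by
    rw [hm]; nlinarith [le_trans (min_le_left (min b ξ₁) (x + min r (min ε (ξ₁ - x)))) (min_le_left b ξ₁)]
  have hmξ₁ : m < ξ₁ := by
    rw [hm]; nlinarith [le_trans (min_le_left (min b ξ₁) (x + min r (min ε (ξ₁ - x)))) (min_le_right b ξ₁)]
  have hmr : m < x + r := by
    have h := min_le_right (min b ξ₁) (x + min r (min ε (ξ₁ - x)))
    have : x + min r (min ε (ξ₁ - x)) ≤ x + r := by
      have := min_le_left r (min ε (ξ₁ - x)); linarith
    rw [hm]; nlinarith
  have hmε : m < x + ε := by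
    have h := min_le_right (min b ξ₁) (x + min r (min ε (ξ₁ - x)))
    have : x + min r (min ε (ξ₁ - x)) ≤ x + ε := by
      have := le_trans (min_le_right r (min ε (ξ₁ - x))) (min_le_left ε (ξ₁ - x))
      linarith
    rw [hm]; nlinarith
  have hfbar_cont : ContinuousOn fbar (Icc x m) := by
    intro t ht
    rcases eq_or_lt_of_le ht.1 with h | h
    · rw [← h]
      rw [← continuousWithinAt_diff_self]
      have hsub : Icc x m \ {x} ⊆ Ioi x := fun ζ hζ =>
        lt_of_le_of_ne hζ.1.1 (by simpa using fun hh => hζ.2 hh.symm)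
      rw [ContinuousWithinAt, hfbarx]
      exact htend_bar.mono_left (nhdsWithin_mono _ hsub)
    · have : ContinuousAt fbar t := by
        have : fbar =ᶠ[𝓝 t] fp :=
          Filter.eventually_iff_exists_mem.2 ⟨Ioi x, Ioi_mem_nhds h, hfbar_eq⟩
        rw [continuousAt_congr this]
        exact (hder t (hdom t h (le_trans ht.2 hmξ₁.le))).continuousAt
      exact this.continuousWithinAt
  have hfbar_deriv : ∀ t ∈ Ico x m, HasDerivWithinAt fbar (pairF v ω (fbar t)) (Ici t) t := by
    intro t ht
    rcases eq_or_lt_of_le ht.1 with h | h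
    · rw [← h]
      rw [hfbarx]
      apply hasDerivWithinAt_Ici_of_tendsto_deriv (s := Ioo x m)
      · intro ζ hζ
        have heq : fbar =ᶠ[𝓝 ζ] fp :=
          Filter.eventually_iff_exists_mem.2 ⟨Ioi x, Ioi_mem_nhds hζ.1, hfbar_eq⟩
        have : HasDerivAt fbar (pairF v ω (fp ζ)) ζ := by
          rw [Filter.EventuallyEq.hasDerivAt_iff heq]
          exact hder ζ (hdom ζ hζ.1 (le_trans hζ.2.le hmξ₁.le))
        exact this.differentiableAt.differentiableWithinAt
      · have hsub : Ioo x m ⊆ Ioi x := Ioo_subset_Ioi_self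
        rw [ContinuousWithinAt, hfbarx]
        exact htend_bar.mono_left (nhdsWithin_mono _ hsub)
      · exact Ioo_mem_nhdsGT_of_mem ⟨le_refl x, hmx⟩
      · have hderiv_eq : ∀ᶠ ζ in 𝓝[>] x, deriv fbar ζ = pairF v ω (fp ζ) := by
          rw [eventually_nhdsWithin_iff]
          filter_upwards [Iio_mem_nhds hmx] with ζ hζ1 hζ2
          have heq : fbar =ᶠ[𝓝 ζ] fp :=
            Filter.eventually_iff_exists_mem.2 ⟨Ioi x, Ioi_mem_nhds hζ2, hfbar_eq⟩
          have : HasDerivAt fbar (pairF v ω (fp ζ)) ζ := by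
            rw [Filter.EventuallyEq.hasDerivAt_iff heq]
            exact hder ζ (hdom ζ hζ2 (le_trans (le_of_lt hζ1) hmξ₁.le))
          exact this.deriv
        have htendF : Tendsto (fun ζ => pairF v ω (fp ζ)) (𝓝[>] x) (𝓝 (pairF v ω y₀)) :=
          ((contDiff_pairF v ω).continuous.continuousAt.tendsto).comp htend
        exact Tendsto.congr' (Filter.EventuallyEq.symm hderiv_eq) htendF
    · have heq : fbar =ᶠ[𝓝 t] fp :=
        Filter.eventually_iff_exists_mem.2 ⟨Ioi x, Ioi_mem_nhds h, hfbar_eq⟩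
      have : HasDerivAt fbar (pairF v ω (fp t)) t := by
        rw [Filter.EventuallyEq.hasDerivAt_iff heq]
        exact hder t (hdom t h (le_trans ht.2.le hmξ₁.le))
      rw [hfbar_eq t h]
      exact this.hasDerivWithinAt
  have hIccsub : Icc x m ⊆ Ioo (x - ε) (x + ε) := by
    intro ζ hζ
    constructor
    · linarith [hζ.1]
    · linarith [hζ.2]
  have hgl : EqOn fbar g (Icc x m) := by
    apply ODE_solution_unique_of_mem_Icc_right (v := fun _ => pairF v ω) (s := fun _ => tset)
      (fun _ _ => hlip) hfbar_cont hfbar_deriv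
    · intro t ht
      rcases eq_or_lt_of_le ht.1 with h | h
      · rw [← h, hfbarx]
        exact mem_of_mem_nhds htset
      · rw [hfbar_eq t h]
        exact hIb ⟨h, lt_of_lt_of_le ht.2 hmb.le⟩
    · exact fun t ht => ((hg t (hIccsub ht)).continuousAt).continuousWithinAt
    · exact fun t ht => (hg t (hIccsub (Ico_subset_Icc_self ht))).hasDerivWithinAt
    · intro t ht
      apply hball2
      rw [Metric.mem_ball, Real.dist_eq, abs_lt]
      constructor
      · have := ht.1; linarith
      · have := ht.2; linarith
    · rw [hfbarx, hgx]
  set η : ℝ := min (m - x) ε with hη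
  have hη0 : 0 < η := lt_min (by linarith) hε
  set y : ℝ := x - η/2 with hy
  have hxy : y < x := by rw [hy]; linarith
  set Cp : ℝ → ℂ × ℂ := fun ξ => if x < ξ then fp ξ else g ξ with hCp
  have hCp_right : ∀ ξ, x < ξ → Cp ξ = fp ξ := by
    intro ξ h; simp only [hCp]; rw [if_pos h]
  have hCp_g : ∀ ξ ∈ Ioo (x - η) (x + η), Cp ξ = g ξ := by
    intro ξ hξ
    rcases lt_or_ge x ξ with h | h
    · rw [hCp_right ξ h]
      have hξIcc : ξ ∈ Icc x m := by
        constructor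
        · exact h.le
        · have := min_le_left (m - x) ε
          have := hξ.2
          linarith
      rw [← hgl hξIcc, hfbar_eq ξ h]
    · simp only [hCp]; rw [if_neg (not_lt.2 h)]
  have hsolC : ∀ ξ ∈ domS ((y : ℝ) : EReal) ξmax, HasDerivAt Cp (pairF v ω (Cp ξ)) ξ := by
    intro ξ hξ
    rcases lt_or_ge x ξ with h | h
    · have heq : Cp =ᶠ[𝓝 ξ] fp :=
        Filter.eventually_iff_exists_mem.2 ⟨Ioi x, Ioi_mem_nhds h, hCp_right⟩
      rw [Filter.EventuallyEq.hasDerivAt_iff heq, hCp_right ξ h]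
      apply hder
      refine ⟨?_, hξ.2⟩
      rw [hx]; exact_mod_cast h
    · have hξy : y < ξ := by
        have := hξ.1
        exact_mod_cast this
      have hξmem : ξ ∈ Ioo (x - η) (x + η) := by
        constructor
        · rw [hy] at hξy; linarith
        · linarith
      have heq : Cp =ᶠ[𝓝 ξ] g :=
        Filter.eventually_iff_exists_mem.2 ⟨Ioo (x - η) (x + η), Ioo_mem_nhds hξmem.1 hξmem.2, hCp_g⟩
      rw [Filter.EventuallyEq.hasDerivAt_iff heq, hCp_g ξ hξmem]
      apply hg
      constructor
      · have := min_le_right (m - x) ε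
        have := hξmem.1
        linarith
      · have := min_le_right (m - x) ε
        have := hξmem.2
        linarith
  have hsolE' : IsSolE v ω (fun ξ => (Cp ξ).1) (fun ξ => (Cp ξ).2) (domS ((y:ℝ):EReal) ξmax) :=
    pair_isSolE hsolC
  have hagree : ∀ ξ ∈ domS ξmin ξmax, (Cp ξ).1 = B ξ ∧ (Cp ξ).2 = B' ξ := by
    intro ξ hξ
    have hξx : x < ξ := by
      have := hξ.1; rw [hx] at this; exact_mod_cast this
    rw [hCp_right ξ hξx]
    exact ⟨rfl, rfl⟩
  have := hmax.2.2 ((y:ℝ):EReal) ξmax _ _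
    (by rw [hx]; exact_mod_cast hxy.le) (le_refl _) hsolE' hagree
  have hyx : ((y:ℝ):EReal) = ((x:ℝ):EReal) := by rw [this.1, hx]
  have : y = x := by exact_mod_cast hyx
  linarith

end VanishAux

namespace VanishAux

lemma core_right {v ω : ℝ} {B B' : ℝ → ℂ} {ξmin ξmax : EReal}
    (hmax : IsMaximalSolE v ω B B' ξmin ξmax)
    {ξ₁ : ℝ} (hξ₁ : ξ₁ ∈ domS ξmin ξmax)
    {c : ℝ} (hc0 : 0 < c) (hc : ∀ ξ ∈ domS ξmin ξmax, ξ₁ ≤ ξ → c ≤ Rq B B' ξ) :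
    Tendsto (fun ξ => ‖B ξ‖) (leftLimF ξmax) atTop := by
  have hsol := hmax.2.1
  have hderP : ∀ ξ ∈ domS ξmin ξmax, HasDerivAt (Pq B) (2 * Rq B B' ξ) ξ :=
    fun ξ hξ => hasDerivAt_Pq (hsol ξ hξ).1
  -- growth estimate
  have hgrow : ∀ a ∈ domS ξmin ξmax, ∀ b ∈ domS ξmin ξmax, ξ₁ ≤ a → a ≤ b →
      Pq B a + 2*c*(b-a) ≤ Pq B b := by
    intro a ha b hb hξ₁a hab
    set D : Set ℝ := domS ξmin ξmax ∩ Ici ξ₁ with hD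
    have hDconv : Convex ℝ D := (convex_domS _ _).inter (convex_Ici ξ₁)
    have hmono : MonotoneOn (fun ξ => Pq B ξ - 2*c*ξ) D := by
      apply monotoneOn_of_hasDerivWithinAt_nonneg (f' := fun ξ => 2 * Rq B B' ξ - 2*c) hDconv
      · intro ξ hξ
        exact (((hderP ξ hξ.1).continuousAt).sub
          ((continuous_const.mul continuous_id).continuousAt)).continuousWithinAt
      · intro ξ hξ
        have hξD : ξ ∈ D := interior_subset hξ
        have h8 : HasDerivAt (fun ξ => Pq B ξ - 2*c*ξ) (2 * Rq B B' ξ - 2*c) ξ := by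
          have h9 := (hderP ξ hξD.1).sub ((hasDerivAt_id ξ).const_mul (2*c))
          simp only [mul_one] at h9
          exact h9
        exact h8.hasDerivWithinAt
      · intro ξ hξ
        have hξD : ξ ∈ D := interior_subset hξ
        have := hc ξ hξD.1 hξD.2
        linarith
    have := hmono ⟨ha, hξ₁a⟩ ⟨hb, le_trans hξ₁a hab⟩ hab
    simp only at this
    linarith
  induction ξmax using EReal.rec with
  | bot => exact absurd hξ₁.2 (by simp)
  | top =>
    rw [leftLimF_top]
    rw [tendsto_atTop]
    intro K
    set K' : ℝ := max K 0 with hK'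
    set T : ℝ := max ξ₁ (ξ₁ + K'^2 / (2*c)) with hT
    filter_upwards [Filter.eventually_ge_atTop T] with ξ hξ
    have hξ₁ξ : ξ₁ ≤ ξ := le_trans (le_max_left _ _) hξ
    have hξdom : ξ ∈ domS ξmin ⊤ :=
      ⟨lt_of_lt_of_le hξ₁.1 (EReal.coe_le_coe_iff.2 hξ₁ξ), EReal.coe_lt_top ξ⟩
    have h1 := hgrow ξ₁ hξ₁ ξ hξdom (le_refl _) hξ₁ξ
    have h2 : K'^2 ≤ Pq B ξ := by
      have h3 : ξ₁ + K'^2/(2*c) ≤ ξ := le_trans (le_max_right _ _) hξ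
      have h4 : 0 ≤ Pq B ξ₁ := Complex.normSq_nonneg _
      have h5 : K'^2/(2*c) * (2*c) = K'^2 := by field_simp
      nlinarith
    have h6 : K' ≤ ‖B ξ‖ := by
      have h7 : ‖B ξ‖^2 = Pq B ξ := Complex.sq_norm _
      nlinarith [norm_nonneg (B ξ), le_max_right K 0]
    exact le_trans (le_max_left K 0) h6
  | coe x =>
    rw [leftLimF_coe]
    have hξ₁x : ξ₁ < x := by
      have := hξ₁.2; exact_mod_cast this
    have hdom : ∀ ξ ∈ Ico ξ₁ x, ξ ∈ domS ξmin ((x:ℝ):EReal) := by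
      intro ξ hξ
      exact ⟨lt_of_lt_of_le hξ₁.1 (EReal.coe_le_coe_iff.2 hξ.1), by exact_mod_cast hξ.2⟩
    by_cases hbdd : ∃ L, ∀ ξ ∈ Ico ξ₁ x, Pq B ξ ≤ L
    · exfalso
      obtain ⟨L, hL⟩ := hbdd
      set fp : ℝ → ℂ × ℂ := fun ξ => (B ξ, B' ξ) with hfp
      set L' : ℝ := max L 0 with hL'
      set KK : ℝ := 1 + |v| + |ω| + L' with hKK
      have hKK0 : 0 < KK := by
        have := abs_nonneg v; have := abs_nonneg ω; have := le_max_right L 0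
        rw [hKK]; linarith
      set d : ℝ := ‖fp ξ₁‖ with hd
      set Cb : ℝ := d * Real.exp (KK * (x - ξ₁)) with hCb
      have hCbb : ∀ ξ ∈ Ico ξ₁ x, ‖(B ξ, B' ξ)‖ ≤ Cb := by
        intro ξ hξ
        have key := norm_le_gronwallBound_of_norm_deriv_right_le (f := fp)
          (f' := fun t => pairF v ω (fp t)) (δ := d) (K := KK) (ε := 0) (a := ξ₁) (b := ξ)
          ?_ ?_ (le_refl d) ?_ ξ ⟨hξ.1, le_refl ξ⟩
        · rw [gronwallBound_ε0] at key
          refine le_trans key ?_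
          rw [hCb]
          apply mul_le_mul_of_nonneg_left _ (norm_nonneg _)
          apply Real.exp_le_exp.2
          have := hξ.2
          nlinarith
        · intro t ht
          have htI : t ∈ Ico ξ₁ x := ⟨ht.1, lt_of_le_of_lt ht.2 hξ.2⟩
          exact ((isSolE_pair hsol) t (hdom t htI)).continuousAt.continuousWithinAt
        · intro t ht
          have htI : t ∈ Ico ξ₁ x := ⟨ht.1, lt_trans ht.2 hξ.2⟩
          exact ((isSolE_pair hsol) t (hdom t htI)).hasDerivWithinAt
        · intro t ht
          have htI : t ∈ Ico ξ₁ x := ⟨ht.1, lt_trans ht.2 hξ.2⟩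
          have hPt : Complex.normSq ((fp t).1) ≤ L' := le_trans (hL t htI) (le_max_left _ _)
          have := norm_pairF_le v ω L' (fp t) hPt
          rw [← hKK] at this
          linarith
      exact bounded_extends_right hmax rfl hξ₁ hCbb
    · push_neg at hbdd
      rw [tendsto_atTop]
      intro K
      set K' : ℝ := max K 0 with hK'
      obtain ⟨ξ₂, hξ₂, hP⟩ := hbdd (K'^2)
      filter_upwards [Ioo_mem_nhdsLT_of_mem (⟨hξ₂.2, le_refl x⟩ : x ∈ Ioc ξ₂ x)] with ξ hξ
      have hξdom : ξ ∈ domS ξmin ((x:ℝ):EReal) :=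
        hdom ξ ⟨le_trans hξ₂.1 hξ.1.le, hξ.2⟩
      have h1 := hgrow ξ₂ (hdom ξ₂ hξ₂) ξ hξdom hξ₂.1 hξ.1.le
      have h2 : K'^2 ≤ Pq B ξ := by nlinarith [hξ.1]
      have h6 : K' ≤ ‖B ξ‖ := by
        have h7 : ‖B ξ‖^2 = Pq B ξ := Complex.sq_norm _
        nlinarith [norm_nonneg (B ξ), le_max_right K 0]
      exact le_trans (le_max_left K 0) h6

end VanishAux

namespace VanishAux

lemma core_left {v ω : ℝ} {B B' : ℝ → ℂ} {ξmin ξmax : EReal}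
    (hmax : IsMaximalSolE v ω B B' ξmin ξmax)
    {ξ₁ : ℝ} (hξ₁ : ξ₁ ∈ domS ξmin ξmax)
    {c : ℝ} (hc0 : 0 < c) (hc : ∀ ξ ∈ domS ξmin ξmax, ξ ≤ ξ₁ → Rq B B' ξ ≤ -c) :
    Tendsto (fun ξ => ‖B ξ‖) (rightLimF ξmin) atTop := by
  have hsol := hmax.2.1
  have hderP : ∀ ξ ∈ domS ξmin ξmax, HasDerivAt (Pq B) (2 * Rq B B' ξ) ξ :=
    fun ξ hξ => hasDerivAt_Pq (hsol ξ hξ).1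
  have hgrow : ∀ a ∈ domS ξmin ξmax, ∀ b ∈ domS ξmin ξmax, b ≤ ξ₁ → a ≤ b →
      Pq B b + 2*c*(b-a) ≤ Pq B a := by
    intro a ha b hb hbξ₁ hab
    set D : Set ℝ := domS ξmin ξmax ∩ Iic ξ₁ with hD
    have hDconv : Convex ℝ D := (convex_domS _ _).inter (convex_Iic ξ₁)
    have hanti : AntitoneOn (fun ξ => Pq B ξ + 2*c*ξ) D := by
      apply antitoneOn_of_hasDerivWithinAt_nonpos (f' := fun ξ => 2 * Rq B B' ξ + 2*c) hDconv
      · intro ξ hξ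
        exact (((hderP ξ hξ.1).continuousAt).add
          ((continuous_const.mul continuous_id).continuousAt)).continuousWithinAt
      · intro ξ hξ
        have hξD : ξ ∈ D := interior_subset hξ
        have h8 : HasDerivAt (fun ξ => Pq B ξ + 2*c*ξ) (2 * Rq B B' ξ + 2*c) ξ := by
          have h9 := (hderP ξ hξD.1).add ((hasDerivAt_id ξ).const_mul (2*c))
          simp only [mul_one] at h9
          exact h9
        exact h8.hasDerivWithinAt
      · intro ξ hξ
        have hξD : ξ ∈ D := interior_subset hξ
        have := hc ξ hξD.1 hξD.2
        linarith
    have := hanti ⟨ha, le_trans hab hbξ₁⟩ ⟨hb, hbξ₁⟩ hab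
    simp only at this
    linarith
  induction ξmin using EReal.rec with
  | top => exact absurd hξ₁.1 (by simp)
  | bot =>
    rw [rightLimF_bot]
    rw [tendsto_atTop]
    intro K
    set K' : ℝ := max K 0 with hK'
    set T : ℝ := min ξ₁ (ξ₁ - K'^2 / (2*c)) with hT
    filter_upwards [Filter.eventually_le_atBot T] with ξ hξ
    have hξ₁ξ : ξ ≤ ξ₁ := le_trans hξ (min_le_left _ _)
    have hξdom : ξ ∈ domS ⊥ ξmax :=
      ⟨EReal.bot_lt_coe ξ, lt_of_le_of_lt (EReal.coe_le_coe_iff.2 hξ₁ξ) hξ₁.2⟩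
    have h1 := hgrow ξ hξdom ξ₁ hξ₁ (le_refl _) hξ₁ξ
    have h2 : K'^2 ≤ Pq B ξ := by
      have h3 : ξ ≤ ξ₁ - K'^2/(2*c) := le_trans hξ (min_le_right _ _)
      have h4 : 0 ≤ Pq B ξ₁ := Complex.normSq_nonneg _
      have h5 : K'^2/(2*c) * (2*c) = K'^2 := by field_simp
      nlinarith
    have h6 : K' ≤ ‖B ξ‖ := by
      have h7 : ‖B ξ‖^2 = Pq B ξ := Complex.sq_norm _
      nlinarith [norm_nonneg (B ξ), le_max_right K 0]
    exact le_trans (le_max_left K 0) h6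
  | coe x =>
    rw [rightLimF_coe]
    have hξ₁x : x < ξ₁ := by
      have := hξ₁.1; exact_mod_cast this
    have hdom : ∀ ξ ∈ Ioc x ξ₁, ξ ∈ domS ((x:ℝ):EReal) ξmax := by
      intro ξ hξ
      exact ⟨by exact_mod_cast hξ.1, lt_of_le_of_lt (EReal.coe_le_coe_iff.2 hξ.2) hξ₁.2⟩
    by_cases hbdd : ∃ L, ∀ ξ ∈ Ioc x ξ₁, Pq B ξ ≤ L
    · exfalso
      obtain ⟨L, hL⟩ := hbdd
      set fp : ℝ → ℂ × ℂ := fun ξ => (B ξ, B' ξ) with hfp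
      set L' : ℝ := max L 0 with hL'
      set KK : ℝ := 1 + |v| + |ω| + L' with hKK
      have hKK0 : 0 < KK := by
        have := abs_nonneg v; have := abs_nonneg ω; have := le_max_right L 0
        rw [hKK]; linarith
      set d : ℝ := ‖fp ξ₁‖ with hd
      set Cb : ℝ := d * Real.exp (KK * (ξ₁ - x)) with hCb
      have hCbb : ∀ ξ ∈ Ioc x ξ₁, ‖(B ξ, B' ξ)‖ ≤ Cb := by
        intro ξ hξ
        -- reflected function
        set fr : ℝ → ℂ × ℂ := fun t => fp (-t) with hfr
        have hfr_deriv : ∀ t, -t ∈ Ioc x ξ₁ → HasDerivAt fr (-pairF v ω (fr t)) t := by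
          intro t ht
          have h1 := (isSolE_pair hsol) (-t) (hdom (-t) ht)
          have h2 := HasDerivAt.scomp t h1 (hasDerivAt_neg t)
          simpa [hfr, Function.comp_def] using h2
        have key := norm_le_gronwallBound_of_norm_deriv_right_le (f := fr)
          (f' := fun t => -pairF v ω (fr t)) (δ := d) (K := KK) (ε := 0) (a := -ξ₁) (b := -ξ)
          ?_ ?_ ?_ ?_ (-ξ) ⟨by linarith [hξ.2], le_refl _⟩
        · rw [gronwallBound_ε0] at key
          have hfrξ : fr (-ξ) = fp ξ := by simp [hfr]
          rw [hfrξ] at key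
          refine le_trans key ?_
          rw [hCb]
          apply mul_le_mul_of_nonneg_left _ (norm_nonneg _)
          apply Real.exp_le_exp.2
          have := hξ.1
          nlinarith
        · intro t ht
          have htI : -t ∈ Ioc x ξ₁ := by
            constructor
            · have := ht.2; linarith [hξ.1]
            · have := ht.1; linarith
          exact (hfr_deriv t htI).continuousAt.continuousWithinAt
        · intro t ht
          have htI : -t ∈ Ioc x ξ₁ := by
            constructor
            · have := ht.2; linarith [hξ.1]
            · have := ht.1; linarith
          exact (hfr_deriv t htI).hasDerivWithinAt
        · simp [hfr, hd]
        · intro t ht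
          have htI : -t ∈ Ioc x ξ₁ := by
            constructor
            · have := ht.2; linarith [hξ.1]
            · have := ht.1; linarith
          have hPt : Complex.normSq ((fr t).1) ≤ L' := le_trans (hL (-t) htI) (le_max_left _ _)
          have := norm_pairF_le v ω L' (fr t) hPt
          rw [← hKK] at this
          rw [norm_neg]
          linarith
      exact bounded_extends_left hmax rfl hξ₁ hCbb
    · push_neg at hbdd
      rw [tendsto_atTop]
      intro K
      set K' : ℝ := max K 0 with hK'
      obtain ⟨ξ₂, hξ₂, hP⟩ := hbdd (K'^2)
      filter_upwards [Ioo_mem_nhdsGT_of_mem (⟨le_refl x, hξ₂.1⟩ : x ∈ Ico x ξ₂)] with ξ hξ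
      have hξdom : ξ ∈ domS ((x:ℝ):EReal) ξmax :=
        hdom ξ ⟨hξ.1, le_trans hξ.2.le hξ₂.2⟩
      have h1 := hgrow ξ hξdom ξ₂ (hdom ξ₂ hξ₂) hξ₂.2 hξ.2.le
      have h2 : K'^2 ≤ Pq B ξ := by nlinarith [hξ.2]
      have h6 : K' ≤ ‖B ξ‖ := by
        have h7 : ‖B ξ‖^2 = Pq B ξ := Complex.sq_norm _
        nlinarith [norm_nonneg (B ξ), le_max_right K 0]
      exact le_trans (le_max_left K 0) h6

end VanishAux

open VanishAux Set Topology in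
/-- A not-identically-zero maximal solution of (E) that vanishes at some interior point has
unbounded modulus: at `ξ_max` if `v ≤ 0`, at `ξ_min` if `v ≥ 0`. -/
theorem vanishing_amplitude_implies_unbounded
    (v ω : ℝ) (B B' : ℝ → ℂ) (ξmin ξmax : EReal)
    (hmax : IsMaximalSolE v ω B B' ξmin ξmax)
    (hnonzero : ¬ ∀ ξ ∈ domS ξmin ξmax, B ξ = 0)
    (ξ₀ : ℝ) (hξ₀ : ξ₀ ∈ domS ξmin ξmax) (hB0 : B ξ₀ = 0) :
    ((v ≤ 0 → Tendsto (fun ξ => ‖B ξ‖) (leftLimF ξmax) atTop) ∧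
     (0 ≤ v → Tendsto (fun ξ => ‖B ξ‖) (rightLimF ξmin) atTop)) := by
  have hsol := hmax.2.1
  -- the second derivative does not vanish at ξ₀
  have hB'0 : B' ξ₀ ≠ 0 := by
    intro h
    have h0 : (fun ξ => (B ξ, B' ξ)) ξ₀ = (0 : ℂ × ℂ) := by
      show (B ξ₀, B' ξ₀) = (0, 0)
      rw [hB0, h]
    have hzero := pair_zero_propagation (isOpen_domS _ _) ((convex_domS _ _).isPreconnected)
      (isSolE_pair hsol) hξ₀ h0
    apply hnonzero
    intro ξ hξ
    have := hzero ξ hξ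
    exact congrArg Prod.fst this
  have hM0 : 0 < Complex.normSq (B' ξ₀) := Complex.normSq_pos.2 hB'0
  have hgq0 : gq v B B' ξ₀ = 0 := by simp [gq, Rq, hB0]
  have hgder : ∀ ξ ∈ domS ξmin ξmax,
      HasDerivAt (gq v B B') (Real.exp (v*ξ) * Complex.normSq (B' ξ)) ξ :=
    fun ξ hξ => hasDerivAt_gq (hsol ξ hξ).1 (hsol ξ hξ).2
  have hmono : MonotoneOn (gq v B B') (domS ξmin ξmax) := by
    apply monotoneOn_of_hasDerivWithinAt_nonneg
      (f' := fun ξ => Real.exp (v*ξ) * Complex.normSq (B' ξ)) (convex_domS _ _)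
    · exact fun ξ hξ => (hgder ξ hξ).continuousAt.continuousWithinAt
    · intro ξ hξ
      rw [(isOpen_domS _ _).interior_eq] at hξ
      exact (hgder ξ hξ).hasDerivWithinAt
    · intro ξ hξ
      exact mul_nonneg (Real.exp_pos _).le (Complex.normSq_nonneg _)
  have hd0 : 0 < Real.exp (v*ξ₀) * Complex.normSq (B' ξ₀) := mul_pos (Real.exp_pos _) hM0
  have hslope := hasDerivAt_iff_tendsto_slope.1 (hgder ξ₀ hξ₀)
  have hev : ∀ᶠ ζ in 𝓝[≠] ξ₀, 0 < slope (gq v B B') ξ₀ ζ :=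
    hslope.eventually (eventually_gt_nhds hd0)
  have hdomev : ∀ᶠ ζ in 𝓝 ξ₀, ζ ∈ domS ξmin ξmax := (isOpen_domS _ _).mem_nhds hξ₀
  -- a point to the right where gq is positive
  have hright : ∃ ξ₁ ∈ domS ξmin ξmax, ξ₀ < ξ₁ ∧ 0 < gq v B B' ξ₁ := by
    have h1 : ∀ᶠ ζ in 𝓝[>] ξ₀, 0 < slope (gq v B B') ξ₀ ζ :=
      hev.filter_mono (nhdsWithin_mono ξ₀ (fun ζ hζ => ne_of_gt hζ))
    have h2 : ∀ᶠ ζ in 𝓝[>] ξ₀, ζ ∈ domS ξmin ξmax := hdomev.filter_mono nhdsWithin_le_nhds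
    have h3 : ∀ᶠ ζ in 𝓝[>] ξ₀, ξ₀ < ζ := self_mem_nhdsWithin
    obtain ⟨ξ₁, ⟨⟨hs, hd⟩, hgt⟩⟩ := ((h1.and h2).and h3).exists
    refine ⟨ξ₁, hd, hgt, ?_⟩
    rw [slope_def_field, hgq0, sub_zero] at hs
    rcases div_pos_iff.1 hs with ⟨h4, _⟩ | ⟨_, h5⟩
    · exact h4
    · linarith
  -- a point to the left where gq is negative
  have hleft : ∃ ξ₂ ∈ domS ξmin ξmax, ξ₂ < ξ₀ ∧ gq v B B' ξ₂ < 0 := by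
    have h1 : ∀ᶠ ζ in 𝓝[<] ξ₀, 0 < slope (gq v B B') ξ₀ ζ :=
      hev.filter_mono (nhdsWithin_mono ξ₀ (fun ζ hζ => ne_of_lt hζ))
    have h2 : ∀ᶠ ζ in 𝓝[<] ξ₀, ζ ∈ domS ξmin ξmax := hdomev.filter_mono nhdsWithin_le_nhds
    have h3 : ∀ᶠ ζ in 𝓝[<] ξ₀, ζ < ξ₀ := self_mem_nhdsWithin
    obtain ⟨ξ₂, ⟨⟨hs, hd⟩, hlt⟩⟩ := ((h1.and h2).and h3).exists
    refine ⟨ξ₂, hd, hlt, ?_⟩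
    rw [slope_def_field, hgq0, sub_zero] at hs
    rcases div_pos_iff.1 hs with ⟨_, h4⟩ | ⟨h5, _⟩
    · linarith
    · exact h5
  have hRq_eq : ∀ ξ, Rq B B' ξ = gq v B B' ξ * Real.exp (-(v*ξ)) := by
    intro ξ
    rw [gq, mul_comm (Real.exp (v*ξ)) (Rq B B' ξ), mul_assoc, ← Real.exp_add]
    simp
  constructor
  · intro hvle
    obtain ⟨ξ₁, hξ₁dom, hξ₀₁, hgq₁⟩ := hright
    apply core_right hmax hξ₁dom
      (c := gq v B B' ξ₁ * Real.exp (-(v*ξ₁)))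
      (mul_pos hgq₁ (Real.exp_pos _))
    intro ξ hξ hle
    have h1 : gq v B B' ξ₁ ≤ gq v B B' ξ := hmono hξ₁dom hξ hle
    have h3 : Real.exp (-(v*ξ₁)) ≤ Real.exp (-(v*ξ)) :=
      Real.exp_le_exp.2 (by nlinarith)
    rw [hRq_eq]
    nlinarith [Real.exp_pos (-(v*ξ)), Real.exp_pos (-(v*ξ₁))]
  · intro hvge
    obtain ⟨ξ₂, hξ₂dom, hξ₂₀, hgq₂⟩ := hleft
    apply core_left hmax hξ₂dom
      (c := (-gq v B B' ξ₂) * Real.exp (-(v*ξ₂)))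
      (mul_pos (by linarith) (Real.exp_pos _))
    intro ξ hξ hle
    have h1 : gq v B B' ξ ≤ gq v B B' ξ₂ := hmono hξ hξ₂dom hle
    have h3 : Real.exp (-(v*ξ₂)) ≤ Real.exp (-(v*ξ)) :=
      Real.exp_le_exp.2 (by nlinarith)
    rw [hRq_eq]
    nlinarith [Real.exp_pos (-(v*ξ)), Real.exp_pos (-(v*ξ₂))]
end
end

section
/- For every retracting front of amplitude 1 and velocity v, and for every real ξ: 0 < |B(ξ)| < 1, Re(B'(ξ)/B(ξ)) > 0, and Im(B'(ξ)/B(ξ)) > 0; that is, the corresponding trajectory (a, κ, q) = (|B|, Re(B'/B), Im(B'/B)) lies in the open octant {a > 0, κ > 0, q > 0} and satisfies a < 1. -/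
open Filter Asymptotics MeasureTheory

noncomputable section

private theorem hasDerivAt_normSq_comp' {B : ℝ → ℂ} {ξ : ℝ} {b' : ℂ} (h : HasDerivAt B b' ξ) :
    HasDerivAt (fun x => Complex.normSq (B x)) (2 * ((starRingEnd ℂ) (B ξ) * b').re) ξ := by
  have hre : HasDerivAt (fun x => (B x).re) b'.re ξ :=
    (Complex.reCLM.hasFDerivAt (x := B ξ)).comp_hasDerivAt ξ h
  have him : HasDerivAt (fun x => (B x).im) b'.im ξ :=
    (Complex.imCLM.hasFDerivAt (x := B ξ)).comp_hasDerivAt ξ h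
  have := (hre.mul hre).add (him.mul him)
  simp only [Complex.normSq_apply]
  exact this.congr_deriv (by simp [Complex.mul_re, Complex.conj_re, Complex.conj_im]; ring)

private theorem hasDerivAt_conj_mul' {B C : ℝ → ℂ} {ξ : ℝ} {b' c' : ℂ}
    (hb : HasDerivAt B b' ξ) (hc : HasDerivAt C c' ξ) :
    HasDerivAt (fun x => (starRingEnd ℂ) (B x) * C x)
      ((starRingEnd ℂ) b' * C ξ + (starRingEnd ℂ) (B ξ) * c') ξ := by
  have hcb : HasDerivAt (fun x => (starRingEnd ℂ) (B x)) ((starRingEnd ℂ) b') ξ := by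
    have := (Complex.conjCLE.toContinuousLinearMap.hasFDerivAt (x := B ξ)).comp_hasDerivAt ξ hb
    exact this
  exact hcb.mul hc

/-- Along a retracting front, `0 < |B| < 1`, `Re (B'/B) > 0` and `Im (B'/B) > 0`: the
trajectory `(a, κ, q)` lies in the open octant `{a > 0, κ > 0, q > 0}` with `a < 1`. -/
theorem retracting_front_in_positive_octant
    (v : ℝ) (B : ℝ → ℂ) (hB : IsRetractingFront v B) :
    ∀ ξ : ℝ, 0 < ‖B ξ‖ ∧ ‖B ξ‖ < 1 ∧
      0 < (deriv B ξ / B ξ).re ∧ 0 < (deriv B ξ / B ξ).im := by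
  obtain ⟨hv, hC2, hode, hbot, htop⟩ := hB
  -- differentiability bookkeeping
  have h1 : Differentiable ℝ B ∧ ContDiff ℝ 1 (deriv B) := by
    have : ContDiff ℝ ((1:ℕ∞) + 1) B := by exact_mod_cast hC2
    rw [contDiff_succ_iff_deriv] at this
    exact ⟨this.1, by exact_mod_cast this.2.2⟩
  have hdB : Differentiable ℝ B := h1.1
  have hdB' : Differentiable ℝ (deriv B) := h1.2.differentiable one_ne_zero
  have hcB : Continuous B := hdB.continuous
  have hcB' : Continuous (deriv B) := hdB'.continuous
  have hcB'' : Continuous (deriv (deriv B)) := by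
    have h2 : ContDiff ℝ ((0:ℕ∞) + 1) (deriv B) := by exact_mod_cast h1.2
    rw [contDiff_succ_iff_deriv] at h2
    exact_mod_cast h2.2.2.continuous
  have hBd : ∀ ξ, HasDerivAt B (deriv B ξ) ξ := fun ξ => (hdB ξ).hasDerivAt
  have hBd' : ∀ ξ, HasDerivAt (deriv B) (deriv (deriv B) ξ) ξ := fun ξ => (hdB' ξ).hasDerivAt
  -- the modulus squared and its derivative
  set f : ℝ → ℝ := fun ξ => Complex.normSq (B ξ) with hf_def
  set df : ℝ → ℝ := fun ξ => 2 * ((starRingEnd ℂ) (B ξ) * deriv B ξ).re with hdf_def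
  have hfd : ∀ ξ, HasDerivAt f (df ξ) ξ := fun ξ => hasDerivAt_normSq_comp' (hBd ξ)
  have hcdf : Continuous df := by
    apply Continuous.mul continuous_const
    exact (Complex.continuous_re.comp ((Complex.continuous_conj.comp hcB).mul hcB'))
  -- rewrite the |B|^2 appearing in the ODE
  have habs2 : ∀ ξ, ((‖B ξ‖ : ℂ)) ^ 2 = ((f ξ : ℝ) : ℂ) := by
    intro ξ
    rw [hf_def]
    push_cast
    rw [← Complex.ofReal_pow, Complex.sq_norm]
  -- tendsto of f
  have hfbot : Tendsto f atBot (nhds 0) := by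
    have := (hbot.mul hbot)
    simpa [hf_def, Complex.normSq_eq_norm_sq, sq] using this
  have hftop : Tendsto f atTop (nhds 1) := by
    have := (htop.mul htop)
    simpa [hf_def, Complex.normSq_eq_norm_sq, sq] using this
  -- g = e^{vξ} f' is monotone
  set g : ℝ → ℝ := fun ξ => Real.exp (v * ξ) * df ξ with hg_def
  have hexpd : ∀ ξ : ℝ, HasDerivAt (fun x : ℝ => Real.exp (v * x)) (v * Real.exp (v * ξ)) ξ := by
    intro ξ
    have := ((hasDerivAt_id ξ).const_mul v).exp
    simpa [mul_comm] using this
  -- second derivative identity : df' = 2|B'|^2 - v * df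
  have hode' : ∀ ξ, deriv (deriv B) ξ = -(v:ℂ) * deriv B ξ + Complex.I * B ξ
      - Complex.I * ((f ξ : ℝ) : ℂ) * B ξ := by
    intro ξ
    rw [hode ξ, habs2 ξ]
  have hdf2 : ∀ ξ, HasDerivAt df (2 * Complex.normSq (deriv B ξ) - v * df ξ) ξ := by
    intro ξ
    have hu := hasDerivAt_conj_mul' (hBd ξ) (hBd' ξ)
    have hre := ((Complex.reCLM.hasFDerivAt
      (x := (starRingEnd ℂ) (B ξ) * deriv B ξ)).comp_hasDerivAt ξ hu).const_mul (2:ℝ)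
    have heq : 2 * ((starRingEnd ℂ) (deriv B ξ) * deriv B ξ
        + (starRingEnd ℂ) (B ξ) * deriv (deriv B) ξ).re
        = 2 * Complex.normSq (deriv B ξ) - v * df ξ := by
      rw [hode' ξ]
      rw [hdf_def, hf_def]
      simp [Complex.add_re, Complex.sub_re, Complex.mul_re, Complex.mul_im, Complex.normSq_apply,
        Complex.conj_re, Complex.conj_im]
      ring
    rw [← heq]
    exact hre
  have hgd : ∀ ξ, HasDerivAt g (Real.exp (v * ξ) * (2 * Complex.normSq (deriv B ξ))) ξ := by
    intro ξ
    have := (hexpd ξ).mul (hdf2 ξ)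
    exact this.congr_deriv (by ring)
  have hgmono : Monotone g := by
    apply monotone_of_deriv_nonneg
    · exact fun ξ => ((hgd ξ).differentiableAt)
    · intro ξ
      rw [(hgd ξ).deriv]
      have := Complex.normSq_nonneg (deriv B ξ)
      have he := (Real.exp_pos (v * ξ)).le
      nlinarith
  -- integral comparison
  have hint : ∀ ξ ξ₀ : ℝ, ξ ≤ ξ₀ →
      f ξ₀ - f ξ ≤ g ξ₀ * ((Real.exp (-v * ξ) - Real.exp (-v * ξ₀)) / v) := by
    intro ξ ξ₀ hle
    have hcexp : Continuous (fun s : ℝ => Real.exp (-v * s)) :=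
      Real.continuous_exp.comp (continuous_const.mul continuous_id)
    have hFTC : ∫ s in ξ..ξ₀, df s = f ξ₀ - f ξ :=
      intervalIntegral.integral_eq_sub_of_hasDerivAt (fun s _ => hfd s)
        (hcdf.intervalIntegrable _ _)
    have hIexp : ∫ s in ξ..ξ₀, Real.exp (-v * s)
        = (Real.exp (-v * ξ) - Real.exp (-v * ξ₀)) / v := by
      have hanti : ∀ s ∈ Set.uIcc ξ ξ₀,
          HasDerivAt (fun x : ℝ => -(Real.exp (-v * x) / v)) (Real.exp (-v * s)) s := by
        intro s _
        have h1 : HasDerivAt (fun x : ℝ => Real.exp (-v * x)) (Real.exp (-v * s) * (-v * 1)) s :=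
          ((hasDerivAt_id s).const_mul (-v)).exp
        have h2 := (h1.div_const v).neg
        exact h2.congr_deriv (by field_simp)
      rw [intervalIntegral.integral_eq_sub_of_hasDerivAt hanti (hcexp.intervalIntegrable _ _)]
      field_simp
      ring
    have hcmp : ∫ s in ξ..ξ₀, df s ≤ ∫ s in ξ..ξ₀, g ξ₀ * Real.exp (-v * s) := by
      apply intervalIntegral.integral_mono_on hle (hcdf.intervalIntegrable _ _)
        ((continuous_const.mul hcexp).intervalIntegrable _ _)
      intro s hs
      show df s ≤ g ξ₀ * Real.exp (-v * s)
      have hgs : g s ≤ g ξ₀ := hgmono hs.2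
      have hds : df s = Real.exp (-v * s) * g s := by
        rw [hg_def]
        simp only [← mul_assoc, ← Real.exp_add]
        simp
      rw [hds]
      have := mul_le_mul_of_nonneg_left hgs (Real.exp_nonneg (-v * s))
      linarith
    have hconst : ∫ s in ξ..ξ₀, g ξ₀ * Real.exp (-v * s)
        = g ξ₀ * ((Real.exp (-v * ξ) - Real.exp (-v * ξ₀)) / v) := by
      rw [intervalIntegral.integral_const_mul (g ξ₀) (fun s : ℝ => Real.exp (-v * s)), hIexp]
    rw [hconst, hFTC] at hcmp
    exact hcmp
  -- step 1 : g ≥ 0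
  have hg0 : ∀ ξ, 0 ≤ g ξ := by
    intro ξ₀
    by_contra hneg
    push_neg at hneg
    -- lower bound for f blows up at -∞
    have hLB : ∀ ξ ≤ ξ₀, f ξ₀ - g ξ₀ * ((Real.exp (-v * ξ) - Real.exp (-v * ξ₀)) / v) ≤ f ξ := by
      intro ξ hle
      have := hint ξ ξ₀ hle
      linarith
    have htend : Tendsto (fun ξ => f ξ₀ - g ξ₀ * ((Real.exp (-v * ξ) - Real.exp (-v * ξ₀)) / v))
        atBot atTop := by
      have h1 : Tendsto (fun ξ : ℝ => Real.exp (-v * ξ)) atBot atTop := by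
        apply Real.tendsto_exp_atTop.comp
        have : Tendsto (fun ξ : ℝ => -v * ξ) atBot atTop := by
          apply Tendsto.const_mul_atBot_of_neg (neg_neg_iff_pos.mpr hv) tendsto_id
        exact this
      have h2 : Tendsto (fun ξ : ℝ => (-g ξ₀ / v) * Real.exp (-v * ξ)) atBot atTop := by
        exact Tendsto.const_mul_atTop (div_pos (by linarith) hv) h1
      have h3 : Tendsto (fun ξ : ℝ =>
          (-g ξ₀ / v) * Real.exp (-v * ξ) + (f ξ₀ + g ξ₀ * Real.exp (-v * ξ₀) / v))
          atBot atTop := h2.atTop_add tendsto_const_nhds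
      apply h3.congr
      intro ξ
      ring
    have hev1 : ∀ᶠ ξ in atBot, (1:ℝ) ≤
        f ξ₀ - g ξ₀ * ((Real.exp (-v * ξ) - Real.exp (-v * ξ₀)) / v) :=
      htend.eventually_ge_atTop 1
    have hev2 : ∀ᶠ ξ in atBot, f ξ < 1 :=
      hfbot.eventually_lt_const (by norm_num : (0:ℝ) < 1)
    have hev3 : ∀ᶠ ξ in atBot, ξ ≤ ξ₀ := eventually_le_atBot ξ₀
    obtain ⟨ξ, hA, hB2, hC⟩ := (hev1.and (hev2.and hev3)).exists
    have := hLB ξ hC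
    linarith
  have hdf0 : ∀ ξ, 0 ≤ df ξ := by
    intro ξ
    have h0 : 0 ≤ Real.exp (v * ξ) * df ξ := hg0 ξ
    have he : (0:ℝ) < Real.exp (v * ξ) := Real.exp_pos _
    nlinarith
  -- step 2 : f monotone
  have hfmono : Monotone f := monotone_of_deriv_nonneg (fun ξ => (hfd ξ).differentiableAt)
    (fun ξ => by rw [(hfd ξ).deriv]; exact hdf0 ξ)
  -- step 3 : f ≤ 1
  have hfle1 : ∀ ξ, f ξ ≤ 1 := fun ξ => hfmono.ge_of_tendsto hftop ξ
  have hf0 : ∀ ξ, 0 ≤ f ξ := fun ξ => Complex.normSq_nonneg _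
  -- step 4 : f > 0
  have habsB : ∀ ξ, ‖B ξ‖ ≤ 1 := by
    intro ξ
    have h2 : ‖B ξ‖ ^ 2 ≤ 1 := by rw [Complex.sq_norm]; exact hfle1 ξ
    nlinarith [norm_nonneg (B ξ)]
  have hB''bd : ∀ ξ, ‖deriv (deriv B) ξ‖
      ≤ v * ‖deriv B ξ‖ + ‖B ξ‖ := by
    intro ξ
    rw [hode' ξ]
    have h1 : (-(v:ℂ) * deriv B ξ + Complex.I * B ξ - Complex.I * ((f ξ : ℝ) : ℂ) * B ξ)
        = -(v:ℂ) * deriv B ξ + Complex.I * ((((1 - f ξ) : ℝ) : ℂ)) * B ξ := by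
      push_cast
      ring
    rw [h1]
    calc ‖-(v:ℂ) * deriv B ξ + Complex.I * ((((1 - f ξ) : ℝ) : ℂ)) * B ξ‖
        ≤ ‖-(v:ℂ) * deriv B ξ‖
          + ‖Complex.I * ((((1 - f ξ) : ℝ) : ℂ)) * B ξ‖ := norm_add_le _ _
      _ = v * ‖deriv B ξ‖ + |1 - f ξ| * ‖B ξ‖ := by
          rw [norm_mul, norm_mul, norm_mul]
          simp [← Complex.ofReal_one, ← Complex.ofReal_sub, Complex.norm_real, Real.norm_eq_abs, abs_of_pos hv]
      _ ≤ v * ‖deriv B ξ‖ + 1 * ‖B ξ‖ := by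
          have h0 := hf0 ξ
          have h2 := hfle1 ξ
          have : |1 - f ξ| ≤ 1 := by rw [abs_le]; constructor <;> linarith
          have := mul_le_mul_of_nonneg_right this (norm_nonneg (B ξ))
          linarith
      _ = v * ‖deriv B ξ‖ + ‖B ξ‖ := by ring
  have hfpos : ∀ ξ, 0 < f ξ := by
    by_contra hneg
    push_neg at hneg
    obtain ⟨ξ₂, hξ₂⟩ := hneg
    have hfz : f ξ₂ = 0 := le_antisymm hξ₂ (hf0 ξ₂)
    have hzero : ∀ ξ ≤ ξ₂, f ξ = 0 := fun ξ hle => le_antisymm (hfz ▸ hfmono hle) (hf0 ξ)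
    have hBz : ∀ ξ < ξ₂, B ξ = 0 := by
      intro ξ hlt
      have h0 := hzero ξ hlt.le
      rw [hf_def] at h0
      exact Complex.normSq_eq_zero.mp h0
    have hlt2 : ξ₂ - 1 < ξ₂ := by linarith
    have hBzs : B (ξ₂ - 1) = 0 := hBz _ hlt2
    have hdBzs : deriv B (ξ₂ - 1) = 0 := by
      have hev : B =ᶠ[nhds (ξ₂ - 1)] fun _ => 0 := by
        filter_upwards [Iio_mem_nhds hlt2] with x hx
        exact hBz x hx
      rw [hev.deriv_eq]
      simp
    set K : ℝ := 2 + 2 * v with hK_def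
    set hh : ℝ → ℝ := fun ξ => Complex.normSq (B ξ) + Complex.normSq (deriv B ξ) with hh_def
    set dh : ℝ → ℝ := fun ξ => 2 * ((starRingEnd ℂ) (B ξ) * deriv B ξ).re
      + 2 * ((starRingEnd ℂ) (deriv B ξ) * deriv (deriv B) ξ).re with hdh_def
    have hhd : ∀ ξ, HasDerivAt hh (dh ξ) ξ := fun ξ =>
      (hasDerivAt_normSq_comp' (hBd ξ)).add (hasDerivAt_normSq_comp' (hBd' ξ))
    have hdh_le : ∀ ξ, dh ξ ≤ K * hh ξ := by
      intro ξ
      have e1 : ((starRingEnd ℂ) (B ξ) * deriv B ξ).re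
          ≤ ‖B ξ‖ * ‖deriv B ξ‖ := by
        calc ((starRingEnd ℂ) (B ξ) * deriv B ξ).re
            ≤ ‖(starRingEnd ℂ) (B ξ) * deriv B ξ‖ := Complex.re_le_norm _
          _ = ‖B ξ‖ * ‖deriv B ξ‖ := by
              rw [norm_mul, Complex.norm_conj]
      have e2 : ((starRingEnd ℂ) (deriv B ξ) * deriv (deriv B) ξ).re
          ≤ ‖deriv B ξ‖ * (v * ‖deriv B ξ‖ + ‖B ξ‖) := by
        calc ((starRingEnd ℂ) (deriv B ξ) * deriv (deriv B) ξ).re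
            ≤ ‖(starRingEnd ℂ) (deriv B ξ) * deriv (deriv B) ξ‖ := Complex.re_le_norm _
          _ = ‖deriv B ξ‖ * ‖deriv (deriv B) ξ‖ := by
              rw [norm_mul, Complex.norm_conj]
          _ ≤ ‖deriv B ξ‖ * (v * ‖deriv B ξ‖ + ‖B ξ‖) :=
              mul_le_mul_of_nonneg_left (hB''bd ξ) (norm_nonneg _)
      have hhx : hh ξ = ‖B ξ‖ ^ 2 + ‖deriv B ξ‖ ^ 2 := by
        show Complex.normSq (B ξ) + Complex.normSq (deriv B ξ) = _
        simp [Complex.normSq_eq_norm_sq]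
      have hdx : dh ξ = 2 * ((starRingEnd ℂ) (B ξ) * deriv B ξ).re
          + 2 * ((starRingEnd ℂ) (deriv B ξ) * deriv (deriv B) ξ).re := rfl
      have hKx : K = 2 + 2 * v := rfl
      rw [hdx, hhx, hKx]
      have hxnn := norm_nonneg (B ξ)
      have hynn := norm_nonneg (deriv B ξ)
      nlinarith [sq_nonneg (‖B ξ‖ - ‖deriv B ξ‖), e1, e2,
        mul_nonneg hxnn hynn, sq_nonneg (‖deriv B ξ‖), hv.le]
    set m : ℝ → ℝ := fun ξ => Real.exp (-K * ξ) * hh ξ with hm_def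
    have hmd : ∀ ξ, HasDerivAt m (Real.exp (-K * ξ) * (dh ξ - K * hh ξ)) ξ := by
      intro ξ
      have h1 : HasDerivAt (fun x : ℝ => Real.exp (-K * x)) (-K * Real.exp (-K * ξ)) ξ := by
        have := ((hasDerivAt_id ξ).const_mul (-K)).exp
        simpa [mul_comm] using this
      have := h1.mul (hhd ξ)
      exact this.congr_deriv (by ring)
    have hmanti : Antitone m := by
      apply antitone_of_deriv_nonpos
      · exact fun ξ => (hmd ξ).differentiableAt
      · intro ξ
        rw [(hmd ξ).deriv]
        have h1 := hdh_le ξ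
        have h2 := (Real.exp_pos (-K * ξ)).le
        nlinarith
    have hm0 : m (ξ₂ - 1) = 0 := by
      rw [hm_def, hh_def]
      simp [hBzs, hdBzs]
    have hfz' : ∀ ξ, ξ₂ - 1 ≤ ξ → f ξ = 0 := by
      intro ξ hge
      have h1 : m ξ ≤ 0 := hm0 ▸ hmanti hge
      have h1' : Real.exp (-K * ξ) * hh ξ ≤ 0 := h1
      have h2 : 0 ≤ hh ξ := add_nonneg (Complex.normSq_nonneg _) (Complex.normSq_nonneg _)
      have h3 : hh ξ = 0 := by
        have he := Real.exp_pos (-K * ξ)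
        nlinarith
      have h3' : Complex.normSq (B ξ) + Complex.normSq (deriv B ξ) = 0 := h3
      have h4 := Complex.normSq_nonneg (deriv B ξ)
      have h5 := Complex.normSq_nonneg (B ξ)
      show Complex.normSq (B ξ) = 0
      linarith
    have hev : ∀ᶠ ξ in atTop, (1:ℝ)/2 < f ξ :=
      hftop.eventually_const_lt (by norm_num : (1:ℝ)/2 < 1)
    obtain ⟨ξ, hgt, hge⟩ := (hev.and (eventually_ge_atTop (ξ₂ - 1))).exists
    rw [hfz' ξ hge] at hgt
    norm_num at hgt
  -- step 5 : g > 0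
  have hgpos : ∀ ξ, 0 < g ξ := by
    intro ξ₃
    rcases (hg0 ξ₃).lt_or_eq with h | h
    · exact h
    exfalso
    have hgz : ∀ s, s ≤ ξ₃ → g s = 0 := fun s hs => le_antisymm (h ▸ hgmono hs) (hg0 s)
    have hdfz : ∀ s, s ≤ ξ₃ → df s = 0 := by
      intro s hs
      have h0 : Real.exp (v * s) * df s = 0 := hgz s hs
      exact (mul_eq_zero.mp h0).resolve_left (ne_of_gt (Real.exp_pos _))
    have hconst : ∀ ξ, ξ ≤ ξ₃ → f ξ = f ξ₃ := by
      intro ξ hle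
      have hFTC : ∫ s in ξ..ξ₃, df s = f ξ₃ - f ξ :=
        intervalIntegral.integral_eq_sub_of_hasDerivAt (fun s _ => hfd s)
          (hcdf.intervalIntegrable _ _)
      have hzero : ∫ s in ξ..ξ₃, df s = 0 := by
        rw [intervalIntegral.integral_congr (g := fun _ => (0:ℝ))]
        · simp
        · intro s hs
          rw [Set.uIcc_of_le hle] at hs
          exact hdfz s hs.2
      rw [hzero] at hFTC
      linarith
    have htb : Tendsto f atBot (nhds (f ξ₃)) := by
      apply Tendsto.congr' _ (tendsto_const_nhds (x := f ξ₃))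
      filter_upwards [eventually_le_atBot ξ₃] with ξ hle
      exact (hconst ξ hle).symm
    have h0 := tendsto_nhds_unique htb hfbot
    exact absurd h0 (ne_of_gt (hfpos ξ₃))
  have hdfpos : ∀ ξ, 0 < df ξ := by
    intro ξ
    have h0 : 0 < Real.exp (v * ξ) * df ξ := hgpos ξ
    have he : (0:ℝ) < Real.exp (v * ξ) := Real.exp_pos _
    nlinarith
  -- step 6 : f < 1
  have hflt1 : ∀ ξ, f ξ < 1 := by
    intro ξ₁
    rcases (hfle1 ξ₁).lt_or_eq with h | h
    · exact h
    exfalso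
    have hconst : ∀ ξ, ξ₁ ≤ ξ → f ξ = 1 := fun ξ hge => le_antisymm (hfle1 ξ) (h ▸ hfmono hge)
    have hev : f =ᶠ[nhds (ξ₁ + 1)] fun _ => 1 := by
      filter_upwards [Ioi_mem_nhds (show ξ₁ < ξ₁ + 1 by linarith)] with x hx
      exact hconst x (le_of_lt hx)
    have hd0 : deriv f (ξ₁ + 1) = 0 := by
      rw [hev.deriv_eq]
      simp
    have hd1 := (hfd (ξ₁ + 1)).deriv
    rw [hd0] at hd1
    exact absurd hd1.symm (ne_of_gt (hdfpos (ξ₁ + 1)))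
  -- step 7 : P = e^{vξ} p strictly monotone
  set p : ℝ → ℝ := fun ξ => ((starRingEnd ℂ) (B ξ) * deriv B ξ).im with hp_def
  have hpd : ∀ ξ, HasDerivAt p (-v * p ξ + f ξ * (1 - f ξ)) ξ := by
    intro ξ
    have hu := hasDerivAt_conj_mul' (hBd ξ) (hBd' ξ)
    have him := (Complex.imCLM.hasFDerivAt
      (x := (starRingEnd ℂ) (B ξ) * deriv B ξ)).comp_hasDerivAt ξ hu
    have heq : ((starRingEnd ℂ) (deriv B ξ) * deriv B ξ
        + (starRingEnd ℂ) (B ξ) * deriv (deriv B) ξ).im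
        = -v * p ξ + f ξ * (1 - f ξ) := by
      rw [hode' ξ]
      rw [hp_def, hf_def]
      simp [Complex.add_im, Complex.sub_im, Complex.mul_re, Complex.mul_im, Complex.normSq_apply,
        Complex.conj_re, Complex.conj_im]
      ring
    rw [← heq]
    exact him
  set P : ℝ → ℝ := fun ξ => Real.exp (v * ξ) * p ξ with hP_def
  have hPd : ∀ ξ, HasDerivAt P (Real.exp (v * ξ) * (f ξ * (1 - f ξ))) ξ := by
    intro ξ
    have := (hexpd ξ).mul (hpd ξ)
    exact this.congr_deriv (by ring)
  have hPmono : StrictMono P := by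
    apply strictMono_of_deriv_pos
    intro ξ
    rw [(hPd ξ).deriv]
    have h1 := hfpos ξ
    have h2 := hflt1 ξ
    exact mul_pos (Real.exp_pos _) (mul_pos h1 (by linarith))
  -- step 8 : backward bound on |B'|
  have hBdbd : ∀ ξ₁ ξ : ℝ, ξ ≤ ξ₁ →
      Real.exp (v * ξ) * ‖deriv B ξ‖ ≤
        Real.exp (v * ξ₁) * ‖deriv B ξ₁‖ + Real.exp (v * ξ₁) / v := by
    intro ξ₁ ξ hle
    set G : ℝ → ℂ := fun s => ((Real.exp (v * s) : ℝ) : ℂ) * deriv B s with hG_def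
    set dG : ℝ → ℂ := fun s =>
      ((Real.exp (v * s) : ℝ) : ℂ) * (Complex.I * B s - Complex.I * ((f s : ℝ) : ℂ) * B s)
      with hdG_def
    have hGd : ∀ s, HasDerivAt G (dG s) s := by
      intro s
      have h1 : HasDerivAt (fun x : ℝ => ((Real.exp (v * x) : ℝ) : ℂ))
          (((v * Real.exp (v * s) : ℝ) : ℂ)) s :=
        (Complex.ofRealCLM.hasFDerivAt (x := Real.exp (v * s))).comp_hasDerivAt s (hexpd s)
      have h2 := h1.mul (hBd' s)
      have heq : ((v * Real.exp (v * s) : ℝ) : ℂ) * deriv B s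
          + ((Real.exp (v * s) : ℝ) : ℂ) * deriv (deriv B) s = dG s := by
        rw [hdG_def, hode' s]
        push_cast
        ring
      rw [heq] at h2
      exact h2
    have hcG : Continuous dG := by
      rw [hdG_def]
      apply Continuous.mul
      · exact Complex.continuous_ofReal.comp (Real.continuous_exp.comp (continuous_const.mul continuous_id))
      · apply Continuous.sub
        · exact continuous_const.mul hcB
        · apply Continuous.mul
          · apply Continuous.mul continuous_const
            exact Complex.continuous_ofReal.comp (Complex.continuous_normSq.comp hcB)
          · exact hcB
    have hFTC : ∫ s in ξ..ξ₁, dG s = G ξ₁ - G ξ :=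
      intervalIntegral.integral_eq_sub_of_hasDerivAt (fun s _ => hGd s)
        (hcG.intervalIntegrable _ _)
    have hcexp : Continuous (fun s : ℝ => Real.exp (v * s)) :=
      Real.continuous_exp.comp (continuous_const.mul continuous_id)
    have hnorm : ∀ s : ℝ, ‖dG s‖ ≤ Real.exp (v * s) := by
      intro s
      rw [hdG_def]
      have heq : Complex.I * B s - Complex.I * ((f s : ℝ) : ℂ) * B s
          = Complex.I * (((1 - f s : ℝ) : ℂ)) * B s := by
        push_cast
        ring
      simp only [heq]
      rw [norm_mul, norm_mul, norm_mul]
      have e0 : ‖((Real.exp (v * s) : ℝ) : ℂ)‖ = Real.exp (v * s) := by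
        rw [Complex.norm_real]
        exact abs_of_pos (Real.exp_pos _)
      have e1 : ‖(Complex.I : ℂ)‖ = 1 := Complex.norm_I
      have e2 : ‖(((1 - f s : ℝ) : ℂ))‖ ≤ 1 := by
        rw [Complex.norm_real]
        rw [Real.norm_eq_abs, abs_le]
        have := hf0 s
        have := hfle1 s
        constructor <;> linarith
      have e3 : ‖B s‖ ≤ 1 := by
        exact habsB s
      rw [e0, e1]
      have h4 : ‖(((1 - f s : ℝ) : ℂ))‖ * ‖B s‖ ≤ 1 :=
        mul_le_one₀ e2 (norm_nonneg _) e3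
      nlinarith [Real.exp_pos (v * s), norm_nonneg (((1 - f s : ℝ) : ℂ)), norm_nonneg (B s)]
    have hIexp : ∫ s in ξ..ξ₁, Real.exp (v * s)
        = (Real.exp (v * ξ₁) - Real.exp (v * ξ)) / v := by
      have hanti : ∀ s ∈ Set.uIcc ξ ξ₁,
          HasDerivAt (fun x : ℝ => Real.exp (v * x) / v) (Real.exp (v * s)) s := by
        intro s _
        have h2 := (hexpd s).div_const v
        exact h2.congr_deriv (by field_simp)
      rw [intervalIntegral.integral_eq_sub_of_hasDerivAt hanti (hcexp.intervalIntegrable _ _)]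
      ring
    have hbd : ‖G ξ₁ - G ξ‖ ≤ Real.exp (v * ξ₁) / v := by
      rw [← hFTC]
      have h5 := intervalIntegral.norm_integral_le_of_norm_le
        (f := dG) (g := fun s => Real.exp (v * s)) (μ := MeasureTheory.volume)
        (a := ξ) (b := ξ₁)
        hle (Filter.Eventually.of_forall fun t _ => hnorm t)
        (hcexp.intervalIntegrable _ _)
      rw [hIexp] at h5
      have h6 : |(Real.exp (v * ξ₁) - Real.exp (v * ξ)) / v| ≤ Real.exp (v * ξ₁) / v := by
        have hmle : Real.exp (v * ξ) ≤ Real.exp (v * ξ₁) :=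
          Real.exp_le_exp.mpr (by nlinarith)
        rw [abs_div, abs_of_pos hv, div_le_div_iff_of_pos_right hv, abs_le]
        constructor
        · nlinarith [Real.exp_pos (v * ξ), Real.exp_pos (v * ξ₁)]
        · nlinarith [Real.exp_pos (v * ξ)]
      linarith [le_abs_self ((Real.exp (v * ξ₁) - Real.exp (v * ξ)) / v)]
    have hGn : ∀ s : ℝ, ‖G s‖ = Real.exp (v * s) * ‖deriv B s‖ := by
      intro s
      rw [hG_def]
      rw [norm_mul, Complex.norm_real]
      rw [Real.norm_eq_abs, abs_of_pos (Real.exp_pos _)]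
    have htri : ‖G ξ‖ ≤ ‖G ξ₁‖ + ‖G ξ₁ - G ξ‖ := by
      have := norm_sub_norm_le (G ξ₁) (G ξ₁ - G ξ)
      simp at this
      linarith [norm_le_insert (G ξ₁) (G ξ)]
    rw [hGn ξ, hGn ξ₁] at *
    linarith
  -- step 9 : p > 0
  have hppos : ∀ ξ, 0 < p ξ := by
    by_contra hneg
    push_neg at hneg
    obtain ⟨ξ₀, hp0⟩ := hneg
    have hP0 : P ξ₀ ≤ 0 := by
      have h0 : Real.exp (v * ξ₀) * p ξ₀ ≤ 0 :=
        mul_nonpos_of_nonneg_of_nonpos (Real.exp_nonneg _) hp0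
      exact h0
    have hc : P (ξ₀ - 1) < 0 :=
      lt_of_lt_of_le (hPmono (show ξ₀ - 1 < ξ₀ by linarith)) hP0
    set ξ₁ := ξ₀ - 1 with hξ₁
    set c := P ξ₁ with hc_def
    set C := Real.exp (v * ξ₁) * ‖deriv B ξ₁‖ + Real.exp (v * ξ₁) / v with hC_def
    have hCpos : 0 < C :=
      add_pos_of_nonneg_of_pos (mul_nonneg (Real.exp_nonneg _) (norm_nonneg _))
        (div_pos (Real.exp_pos _) hv)
    have hlow : ∀ ξ, ξ ≤ ξ₁ → -c ≤ ‖B ξ‖ * C := by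
      intro ξ hle
      have h1 : P ξ ≤ c := hPmono.monotone hle
      have h1' : Real.exp (v * ξ) * p ξ ≤ c := h1
      have h3 : -p ξ ≤ ‖B ξ‖ * ‖deriv B ξ‖ := by
        have hi : |p ξ| ≤ ‖(starRingEnd ℂ) (B ξ) * deriv B ξ‖ :=
          Complex.abs_im_le_norm _
        rw [norm_mul, Complex.norm_conj] at hi
        have := neg_abs_le (p ξ)
        linarith
      have h4 := hBdbd ξ₁ ξ hle
      -- multiply h3 through
      have he := Real.exp_pos (v * ξ)
      have habs0 := norm_nonneg (B ξ)
      -- exp(vξ) * (-p ξ) ≤ abs(Bξ) * (exp(vξ) * abs(B'ξ)) ≤ abs(Bξ) * C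
      have h5 : Real.exp (v * ξ) * (-p ξ) ≤ ‖B ξ‖ * C := by
        calc Real.exp (v * ξ) * (-p ξ)
            ≤ Real.exp (v * ξ) * (‖B ξ‖ * ‖deriv B ξ‖) :=
              mul_le_mul_of_nonneg_left h3 he.le
          _ = ‖B ξ‖ * (Real.exp (v * ξ) * ‖deriv B ξ‖) := by ring
          _ ≤ ‖B ξ‖ * C := mul_le_mul_of_nonneg_left h4 habs0
      nlinarith
    have hev : ∀ᶠ ξ in atBot, ‖B ξ‖ < -c / C := by
      apply hbot.eventually_lt_const
      exact div_pos (by linarith) hCpos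
    obtain ⟨ξ, hlt, hle⟩ := (hev.and (eventually_le_atBot ξ₁)).exists
    have hA := hlow ξ hle
    have hB2 : ‖B ξ‖ * C < (-c / C) * C :=
      mul_lt_mul_of_pos_right hlt hCpos
    rw [div_mul_cancel₀ _ (ne_of_gt hCpos)] at hB2
    linarith
  -- final assembly
  intro ξ
  have hfp := hfpos ξ
  have hBne : B ξ ≠ 0 := by
    intro h
    rw [hf_def] at hfp
    simp [h] at hfp
  refine ⟨norm_pos_iff.mpr hBne, ?_, ?_, ?_⟩
  · have h1 : ‖B ξ‖ ^ 2 < 1 := by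
      rw [Complex.sq_norm]; exact hflt1 ξ
    nlinarith [norm_nonneg (B ξ)]
  · have hre : (deriv B ξ / B ξ).re = df ξ / 2 / f ξ := by
      rw [Complex.div_re, hdf_def, hf_def]
      simp [Complex.mul_re, Complex.conj_re, Complex.conj_im]
      ring
    rw [hre]
    have := hdfpos ξ
    positivity
  · have him : (deriv B ξ / B ξ).im = p ξ / f ξ := by
      rw [Complex.div_im, hp_def, hf_def]
      simp [Complex.mul_im, Complex.conj_re, Complex.conj_im]
      ring
    rw [him]
    have := hppos ξ
    positivity
end
end

section
/- Let v ≤ 0 and ω be real numbers and let a₀ > 0. Then there is no twice continuously differentiable function B : ℝ → ℂ solving B''(ξ) = −v B'(ξ) + i ω B(ξ) − i |B(ξ)|² B(ξ) on all of ℝ such that |B(ξ)| → 0 as ξ → −∞ and |B(ξ)| → a₀ as ξ → +∞. -/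
open Filter

/-- For `v ≤ 0` there is no retracting front of amplitude `a₀ > 0`: no `C²` solution on `ℝ`
of `B'' = -v B' + iω B - i|B|² B` with `|B| → 0` at `-∞` and `|B| → a₀` at `+∞`. -/
theorem no_retracting_front_for_nonpositive_velocity
    (v ω : ℝ) (hv : v ≤ 0) (a₀ : ℝ) (ha₀ : 0 < a₀) :
    ¬ ∃ B : ℝ → ℂ, ContDiff ℝ 2 B ∧
      (∀ ξ : ℝ, deriv (deriv B) ξ =
        -(v : ℂ) * deriv B ξ + Complex.I * (ω : ℂ) * B ξ
          - Complex.I * ((‖B ξ‖ : ℝ) : ℂ) ^ 2 * B ξ) ∧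
      Tendsto (fun ξ => ‖B ξ‖) atBot (nhds 0) ∧
      Tendsto (fun ξ => ‖B ξ‖) atTop (nhds a₀) := by
  rintro ⟨B, hB, hODE, hbot, htop⟩
  -- Differentiability facts
  have hBd : Differentiable ℝ B := hB.differentiable two_ne_zero
  have hB2 : ContDiff ℝ ((1:ℕ)+1) B := by exact_mod_cast hB
  have hB'd : Differentiable ℝ (deriv B) :=
    ((contDiff_succ_iff_deriv.mp hB2).2.2).differentiable one_ne_zero
  -- The key real quantities
  set K : ℝ → ℝ := fun x => ((starRingEnd ℂ) (B x) * deriv B x).re with hKdef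
  set m : ℝ → ℝ := fun x => Complex.normSq (B x) with hmdef
  -- derivative of the product conj B * B'
  have hprod : ∀ ξ : ℝ, HasDerivAt (fun x => (starRingEnd ℂ) (B x) * deriv B x)
      ((starRingEnd ℂ) (deriv B ξ) * deriv B ξ
        + (starRingEnd ℂ) (B ξ) * deriv (deriv B) ξ) ξ := by
    intro ξ
    have hc : HasDerivAt (fun x => (starRingEnd ℂ) (B x)) ((starRingEnd ℂ) (deriv B ξ)) ξ :=
      Complex.conjCLE.hasFDerivAt.comp_hasDerivAt ξ (hBd ξ).hasDerivAt
    exact hc.mul (hB'd ξ).hasDerivAt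
  -- K' = |B'|² - v K
  have hK : ∀ ξ : ℝ, HasDerivAt K (Complex.normSq (deriv B ξ) - v * K ξ) ξ := by
    intro ξ
    have h := Complex.reCLM.hasFDerivAt.comp_hasDerivAt ξ (hprod ξ)
    have hval : (((starRingEnd ℂ) (deriv B ξ) * deriv B ξ
        + (starRingEnd ℂ) (B ξ) * deriv (deriv B) ξ).re)
        = Complex.normSq (deriv B ξ) - v * K ξ := by
      rw [hODE ξ]
      simp only [hKdef]
      simp [Complex.mul_re, Complex.mul_im, Complex.normSq_apply, ← Complex.ofReal_pow]
      ring
    rw [hKdef]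
    simpa [Function.comp_def, hval, hKdef] using h
  -- m' = 2 K
  have hm : ∀ ξ : ℝ, HasDerivAt m (2 * K ξ) ξ := by
    intro ξ
    have hmeq : m = fun x => ((starRingEnd ℂ) (B x) * B x).re := by
      funext x
      simp [hmdef, Complex.mul_re, Complex.normSq_apply, mul_comm]
    have hc : HasDerivAt (fun x => (starRingEnd ℂ) (B x)) ((starRingEnd ℂ) (deriv B ξ)) ξ :=
      Complex.conjCLE.hasFDerivAt.comp_hasDerivAt ξ (hBd ξ).hasDerivAt
    have h := Complex.reCLM.hasFDerivAt.comp_hasDerivAt ξ (hc.mul (hBd ξ).hasDerivAt)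
    have hval : (((starRingEnd ℂ) (deriv B ξ) * B ξ
        + (starRingEnd ℂ) (B ξ) * deriv B ξ).re) = 2 * K ξ := by
      simp only [hKdef]
      simp [Complex.mul_re]
      ring
    rw [hmeq]
    simpa [Function.comp_def, hval, hKdef] using h
  -- limits of m
  have hmtop : Tendsto m atTop (nhds (a₀ ^ 2)) := by
    have : Tendsto (fun ξ => ‖B ξ‖ ^ 2) atTop (nhds (a₀ ^ 2)) := htop.pow 2
    simpa [hmdef, Complex.sq_norm] using this
  have hmbot : Tendsto m atBot (nhds 0) := by
    have : Tendsto (fun ξ => ‖B ξ‖ ^ 2) atBot (nhds (0 ^ 2)) := hbot.pow 2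
    simpa [hmdef, Complex.sq_norm] using this
  -- g = e^{vξ} K is monotone
  have hg : ∀ ξ : ℝ, HasDerivAt (fun x => Real.exp (v * x) * K x)
      (Real.exp (v * ξ) * Complex.normSq (deriv B ξ)) ξ := by
    intro ξ
    have he : HasDerivAt (fun x => Real.exp (v * x)) (v * Real.exp (v * ξ)) ξ := by
      have := (Real.hasDerivAt_exp (v * ξ)).comp ξ ((hasDerivAt_id ξ).const_mul v)
      simpa [mul_comm, Function.comp_def] using this
    have h := he.mul (hK ξ)
    have : v * Real.exp (v * ξ) * K ξ
        + Real.exp (v * ξ) * (Complex.normSq (deriv B ξ) - v * K ξ)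
        = Real.exp (v * ξ) * Complex.normSq (deriv B ξ) := by ring
    rwa [this] at h
  have hgmono : Monotone (fun x => Real.exp (v * x) * K x) := by
    apply monotone_of_deriv_nonneg
    · exact fun x => (hg x).differentiableAt
    · intro x
      rw [(hg x).deriv]
      exact mul_nonneg (Real.exp_pos _).le (Complex.normSq_nonneg _)
  -- K is nonpositive everywhere
  have hKle : ∀ ξ : ℝ, K ξ ≤ 0 := by
    by_contra hcon
    push_neg at hcon
    obtain ⟨ξ₀, hξ₀⟩ := hcon
    -- For ξ ≥ ξ₀, K ξ ≥ K ξ₀ > 0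
    have hKge : ∀ ξ ≥ ξ₀, K ξ₀ ≤ K ξ := by
      intro ξ hξ
      have h1 : Real.exp (v * ξ₀) * K ξ₀ ≤ Real.exp (v * ξ) * K ξ := hgmono hξ
      have h2 : Real.exp (v * ξ) ≤ Real.exp (v * ξ₀) := by
        apply Real.exp_le_exp.mpr
        nlinarith
      have h3 : Real.exp (v * ξ) * K ξ₀ ≤ Real.exp (v * ξ₀) * K ξ₀ := by nlinarith
      have := le_trans h3 h1
      exact le_of_mul_le_mul_left this (Real.exp_pos _)
    -- m grows at least linearly on [ξ₀, ∞)
    have hlin : ∀ ξ ≥ ξ₀, m ξ₀ + 2 * K ξ₀ * (ξ - ξ₀) ≤ m ξ := by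
      intro ξ hξ
      have hmono : MonotoneOn (fun x => m x - 2 * K ξ₀ * x) (Set.Ici ξ₀) := by
        apply monotoneOn_of_deriv_nonneg (convex_Ici ξ₀)
        · exact Continuous.continuousOn (by
            have : Continuous m := by
              have : Differentiable ℝ m := fun x => (hm x).differentiableAt
              exact this.continuous
            fun_prop)
        · intro x _
          have hd : HasDerivAt (fun x => m x - 2 * K ξ₀ * x) (2 * K x - 2 * K ξ₀ * 1) x :=
            (hm x).sub ((hasDerivAt_id x).const_mul (2 * K ξ₀))
          exact hd.differentiableAt.differentiableWithinAt
        · intro x hx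
          have hx' : ξ₀ ≤ x := le_of_lt (by simpa using hx)
          have hd : HasDerivAt (fun x => m x - 2 * K ξ₀ * x) (2 * K x - 2 * K ξ₀ * 1) x :=
            (hm x).sub ((hasDerivAt_id x).const_mul (2 * K ξ₀))
          rw [hd.deriv]
          have := hKge x hx'
          nlinarith
      have := hmono (Set.self_mem_Ici) (Set.mem_Ici.mpr hξ) hξ
      simp only at this
      nlinarith
    -- hence m → ∞, contradiction with m → a₀²
    have hatTop : Tendsto m atTop atTop := by
      apply tendsto_atTop_mono' atTop
        (f₁ := fun ξ => m ξ₀ + 2 * K ξ₀ * (ξ - ξ₀))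
      · filter_upwards [eventually_ge_atTop ξ₀] with ξ hξ using hlin ξ hξ
      · apply tendsto_atTop_add_const_left
        apply Tendsto.const_mul_atTop (by linarith : (0:ℝ) < 2 * K ξ₀)
        exact tendsto_atTop_add_const_right _ _ tendsto_id
    exact not_tendsto_atTop_of_tendsto_nhds hmtop hatTop
  -- hence m is antitone
  have hmanti : Antitone m := by
    apply antitone_of_deriv_nonpos
    · exact fun x => (hm x).differentiableAt
    · intro x
      rw [(hm x).deriv]
      linarith [hKle x]
  -- m ξ ≤ 0 for all ξ, from the limit at -∞
  have hmle : ∀ ξ : ℝ, m ξ ≤ 0 := by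
    intro ξ
    apply ge_of_tendsto hmbot
    filter_upwards [eventually_le_atBot ξ] with η hη using hmanti hη
  -- but m → a₀² > 0 at +∞
  have : a₀ ^ 2 ≤ 0 := le_of_tendsto hmtop (Eventually.of_forall hmle)
  nlinarith
end
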